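/- arXiv:2504.10761 — 7 statements merged into one kernel-verified Lean document; each statement's English description precedes it below -/
import Mathlib

section
/- Let p be a prime number and let H be a closed subgroup of the additive topological group ℤ_p × ℤ_p (with the product topology) such that the quotient topological group (ℤ_p × ℤ_p)/H is isomorphic, as a topological additive group, to ℤ_p. Then there exist a, b ∈ ℤ_p with (p ∤ a or p ∤ b) such that H is equal to the ℤ_p-submodule of ℤ_p × ℤ_p generated by the single element (a, b). -/
set_option synthInstance.maxHeartbeats 1000000
set_option maxHeartbeats 1000000


/-- Let `p` be a prime and `H` a closed subgroup of the additive
topological group `ℤ_p × ℤ_p` such that the quotient topological group is isomorphic,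
as a topological additive group, to `ℤ_p`.  Then there are `a, b ∈ ℤ_p` with
`p ∤ a` or `p ∤ b` such that `H = ℤ_p·(a, b)`. -/
theorem stmt0 (p : ℕ) [Fact p.Prime]
    (H : AddSubgroup (ℤ_[p] × ℤ_[p])) (hH : IsClosed (H : Set (ℤ_[p] × ℤ_[p])))
    (e : ((ℤ_[p] × ℤ_[p]) ⧸ H) ≃+ ℤ_[p])
    (he : Continuous e) (he' : Continuous e.symm) :
    ∃ a b : ℤ_[p], (¬ (p : ℤ_[p]) ∣ a ∨ ¬ (p : ℤ_[p]) ∣ b) ∧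
      H = (Submodule.span ℤ_[p] {((a, b) : ℤ_[p] × ℤ_[p])}).toAddSubgroup := by
  classical
  set φ : ℤ_[p] × ℤ_[p] →+ ℤ_[p] :=
    e.toAddMonoidHom.comp (QuotientAddGroup.mk' H) with hφdef
  have hφcont : Continuous φ := he.comp continuous_quot_mk
  have hker : ∀ v, φ v = 0 ↔ v ∈ H := by
    intro v
    have hφv : φ v = e ((QuotientAddGroup.mk' H) v) := rfl
    constructor
    · intro h
      rw [hφv] at h
      have h0 : (QuotientAddGroup.mk' H) v = 0 := by
        have := congrArg e.symm h
        simpa using this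
      rwa [QuotientAddGroup.mk'_apply, QuotientAddGroup.eq_zero_iff] at h0
    · intro h
      have h0 : (QuotientAddGroup.mk' H) v = 0 := by
        rwa [QuotientAddGroup.mk'_apply, QuotientAddGroup.eq_zero_iff]
      rw [hφv, h0, map_zero]
  have hlin : ∀ (v : ℤ_[p] × ℤ_[p]) (r : ℤ_[p]), φ (r • v) = r * φ v := by
    intro v
    have h1 : Continuous fun r : ℤ_[p] => φ (r • v) :=
      hφcont.comp (continuous_id.smul continuous_const)
    have h2 : Continuous fun r : ℤ_[p] => r * φ v :=
      continuous_id.mul continuous_const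
    have hZ : ∀ n : ℤ, φ ((n : ℤ_[p]) • v) = (n : ℤ_[p]) * φ v := by
      intro n
      rw [Int.cast_smul_eq_zsmul, map_zsmul, ← zsmul_eq_mul]
    have hdense := PadicInt.denseRange_intCast (p := p)
    have heq : (fun r : ℤ_[p] => φ (r • v)) = fun r => r * φ v :=
      hdense.equalizer h1 h2 (funext hZ)
    intro r
    exact congrFun heq r
  set c := φ (1, 0) with hc
  set d := φ (0, 1) with hd
  have hφval : ∀ x y : ℤ_[p], φ (x, y) = x * c + y * d := by
    intro x y
    have hxy : ((x, y) : ℤ_[p] × ℤ_[p])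
        = x • ((1:ℤ_[p]), (0:ℤ_[p])) + y • ((0:ℤ_[p]), (1:ℤ_[p])) := by
      simp [Prod.ext_iff]
    rw [hxy, map_add, hlin, hlin]
  -- surjectivity gives primitivity of (c, d)
  obtain ⟨w, hw⟩ := (e.surjective.comp (QuotientAddGroup.mk'_surjective H)) 1
  have hone : w.1 * c + w.2 * d = 1 := by
    rw [← hφval]; exact hw
  have hnot : ¬ (p : ℤ_[p]) ∣ c ∨ ¬ (p : ℤ_[p]) ∣ d := by
    by_contra h
    push_neg at h
    have hdvd : (p : ℤ_[p]) ∣ 1 := by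
      rw [← hone]; exact dvd_add (h.1.mul_left _) (h.2.mul_left _)
    have hu : IsUnit ((p : ℤ_[p])) := isUnit_of_dvd_one hdvd
    have hnorm : ‖((p : ℕ) : ℤ_[p])‖ = 1 := PadicInt.isUnit_iff.mp hu
    rw [PadicInt.norm_p] at hnorm
    have hp2 : (2 : ℝ) ≤ (p : ℝ) := by
      exact_mod_cast (Fact.out : p.Prime).two_le
    have : (p : ℝ)⁻¹ < 1 := by
      rw [inv_lt_one_iff₀]; right; linarith
    linarith [hnorm ▸ this]
  have unit_of_not_dvd : ∀ z : ℤ_[p], ¬ (p : ℤ_[p]) ∣ z → IsUnit z := by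
    intro z hz
    rw [PadicInt.isUnit_iff]
    rcases lt_or_eq_of_le (PadicInt.norm_le_one z) with hlt | heq2
    · exact absurd ((PadicInt.norm_lt_one_iff_dvd z).mp hlt) hz
    · exact heq2
  refine ⟨-d, c, ?_, ?_⟩
  · rcases hnot with h | h
    · exact Or.inr h
    · exact Or.inl fun hd' => h (dvd_neg.mp hd')
  · ext v
    obtain ⟨x, y⟩ := v
    rw [← hker, hφval, Submodule.mem_toAddSubgroup, Submodule.mem_span_singleton]
    constructor
    · intro heq
      rcases hnot with h | h
      · obtain ⟨c', hcc'⟩ := (unit_of_not_dvd c h).exists_right_inv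
        refine ⟨y * c', ?_⟩
        rw [Prod.smul_mk, smul_eq_mul, smul_eq_mul, Prod.mk.injEq]
        constructor
        · linear_combination -c' * heq + x * hcc'
        · linear_combination y * hcc'
      · obtain ⟨d', hdd'⟩ := (unit_of_not_dvd d h).exists_right_inv
        refine ⟨-(x * d'), ?_⟩
        rw [Prod.smul_mk, smul_eq_mul, smul_eq_mul, Prod.mk.injEq]
        constructor
        · linear_combination x * hdd'
        · linear_combination -d' * heq + y * hdd'
    · rintro ⟨r, hr⟩
      rw [Prod.smul_mk, smul_eq_mul, smul_eq_mul, Prod.mk.injEq] at hr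
      linear_combination -c * hr.1 - d * hr.2
end

section
/- Let p be a prime number, let R = ℤ_p[[X,Y]] be the ring of formal power series in two variables over ℤ_p, and let M be a finitely generated pseudo-null R-module. Let f ∈ R be a prime element. Then the quotient module M/fM is a torsion module over the integral domain R/(f); that is, every element of M/fM is annihilated by some nonzero element of R/(f). -/
open MvPowerSeries

variable {p : ℕ} [Fact p.Prime]

/-- A finitely generated module `M` over a commutative ring `R` is *pseudo-null*
if its localization at every prime ideal of height at most `1` vanishes. -/
def IsPseudoNull (R : Type*) [CommRing R] (M : Type*) [AddCommGroup M] [Module R M] : Prop :=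
  ∀ (P : Ideal R) (hP : P.IsPrime),
    Order.height (⟨P, hP⟩ : PrimeSpectrum R) ≤ 1 →
      Subsingleton (LocalizedModule P.primeCompl M)

/-- degree of a monomial -/
def mdeg (e : Fin 2 →₀ ℕ) : ℕ := e.sum fun _ k => k

lemma mdeg_add (u w : Fin 2 →₀ ℕ) : mdeg (u + w) = mdeg u + mdeg w := by
  simp [mdeg, Finsupp.sum_add_index]

lemma mdeg_eq_zero {e : Fin 2 →₀ ℕ} (h : mdeg e = 0) : e = 0 := by
  rw [mdeg, Finsupp.sum] at h
  have h' := Finset.sum_eq_zero_iff.mp h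
  ext i
  simp only [Finsupp.coe_zero, Pi.zero_apply]
  by_cases hi : i ∈ e.support
  · exact h' i hi
  · exact Finsupp.notMem_support_iff.mp hi

/-- the key divisibility condition -/
def Wc (p : ℕ) [Fact p.Prime] (n : ℕ) (g : MvPowerSeries (Fin 2) ℤ_[p]) : Prop :=
  ∀ e : Fin 2 →₀ ℕ, (p : ℤ_[p]) ^ (n - mdeg e) ∣ MvPowerSeries.coeff e g

lemma Wc_zero (g : MvPowerSeries (Fin 2) ℤ_[p]) : Wc p 0 g := by
  intro e; simp

lemma Wc_mul {n m : ℕ} {a b : MvPowerSeries (Fin 2) ℤ_[p]} (ha : Wc p n a) (hb : Wc p m b) :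
    Wc p (n + m) (a * b) := by
  intro e
  rw [MvPowerSeries.coeff_mul]
  refine Finset.dvd_sum ?_
  rintro ⟨u, w⟩ huw
  have huw' : u + w = e := Finset.HasAntidiagonal.mem_antidiagonal.mp huw
  have h1 := ha u
  have h2 := hb w
  have : (p : ℤ_[p]) ^ ((n - mdeg u) + (m - mdeg w)) ∣
      MvPowerSeries.coeff u a * MvPowerSeries.coeff w b := by
    rw [pow_add]; exact mul_dvd_mul h1 h2
  refine dvd_trans (pow_dvd_pow _ ?_) this
  have : mdeg e = mdeg u + mdeg w := by rw [← huw', mdeg_add]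
  omega

lemma Wc_of_not_isUnit {f : MvPowerSeries (Fin 2) ℤ_[p]} (hf : ¬ IsUnit f) : Wc p 1 f := by
  intro e
  rcases Nat.eq_zero_or_pos (mdeg e) with h | h
  · have he : e = 0 := mdeg_eq_zero h
    have hcc : ¬ IsUnit (MvPowerSeries.constantCoeff f) :=
      fun hu => hf (MvPowerSeries.isUnit_iff_constantCoeff.mpr hu)
    have : (p : ℤ_[p]) ∣ MvPowerSeries.constantCoeff f := by
      rw [← PadicInt.norm_lt_one_iff_dvd]
      exact PadicInt.not_isUnit_iff.mp hcc
    have h1 : 1 - mdeg e = 1 := by omega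
    rw [h1, pow_one, he, MvPowerSeries.coeff_zero_eq_constantCoeff]
    exact this
  · have : 1 - mdeg e = 0 := by omega
    simp [this]

lemma Wc_pow {f : MvPowerSeries (Fin 2) ℤ_[p]} (hf : ¬ IsUnit f) (n : ℕ) : Wc p n (f ^ n) := by
  induction n with
  | zero => exact Wc_zero _
  | succ k ih =>
      have := Wc_mul ih (Wc_of_not_isUnit hf)
      simpa [pow_succ] using this

lemma padic_eq_zero_of_forall_dvd {x : ℤ_[p]} (h : ∀ n : ℕ, (p : ℤ_[p]) ^ n ∣ x) : x = 0 := by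
  have hx : x ∈ (⨅ n : ℕ, (IsLocalRing.maximalIdeal ℤ_[p]) ^ n) := by
    refine Ideal.mem_iInf.mpr fun n => ?_
    rw [PadicInt.maximalIdeal_eq_span_p, Ideal.span_singleton_pow,
      Ideal.mem_span_singleton]
    exact h n
  rwa [Ideal.iInf_pow_eq_bot_of_isLocalRing _
    (Ideal.IsMaximal.ne_top (IsLocalRing.maximalIdeal.isMaximal _)), Ideal.mem_bot] at hx

lemma eq_zero_of_forall_pow_dvd {f g : MvPowerSeries (Fin 2) ℤ_[p]} (hf : ¬ IsUnit f)
    (h : ∀ n : ℕ, f ^ n ∣ g) : g = 0 := by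
  ext e
  rw [map_zero]
  refine padic_eq_zero_of_forall_dvd fun n => ?_
  obtain ⟨t, ht⟩ := h (n + mdeg e)
  have hW : Wc p (n + mdeg e) g := by
    rw [ht]
    simpa using Wc_mul (Wc_pow hf (n + mdeg e)) (Wc_zero t)
  have := hW e
  have hexp : (n + mdeg e) - mdeg e = n := by omega
  rwa [hexp] at this

lemma prime_below_is_bot {f : MvPowerSeries (Fin 2) ℤ_[p]} (hf : Prime f)
    (Q : Ideal (MvPowerSeries (Fin 2) ℤ_[p])) (hQ : Q.IsPrime) (hlt : Q < Ideal.span {f}) :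
    Q = ⊥ := by
  have hfQ : f ∉ Q := by
    intro hfin
    exact absurd ((Ideal.span_singleton_le_iff_mem Q).mpr hfin) (not_le_of_gt hlt)
  have hstep : Q ≤ Ideal.span {f} * Q := by
    intro q hq
    obtain ⟨t, ht⟩ := Ideal.mem_span_singleton'.mp (le_of_lt hlt hq)
    have htQ : t ∈ Q := by
      have : f * t ∈ Q := by rwa [mul_comm, ht]
      rcases hQ.mem_or_mem this with h | h
      · exact absurd h hfQ
      · exact h
    have hmem : f * t ∈ Ideal.span {f} * Q :=
      Ideal.mul_mem_mul (Ideal.mem_span_singleton_self f) htQ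
    have hq' : q = f * t := by rw [← ht, mul_comm]
    rw [hq']
    exact hmem
  have hpow : ∀ n : ℕ, Q ≤ Ideal.span {f} ^ n := by
    intro n
    induction n with
    | zero => simp
    | succ k ih =>
        calc Q ≤ Ideal.span {f} * Q := hstep
        _ ≤ Ideal.span {f} * Ideal.span {f} ^ k := Ideal.mul_mono le_rfl ih
        _ = Ideal.span {f} ^ (k + 1) := by rw [pow_succ, mul_comm]
  refine (Submodule.eq_bot_iff Q).mpr fun q hq => ?_
  refine eq_zero_of_forall_pow_dvd hf.not_unit fun n => ?_
  have := hpow n hq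
  rwa [Ideal.span_singleton_pow, Ideal.mem_span_singleton] at this

lemma height_span_le_one {f : MvPowerSeries (Fin 2) ℤ_[p]} (hf : Prime f)
    (hP : (Ideal.span {f}).IsPrime) :
    Order.height (⟨Ideal.span {f}, hP⟩ : PrimeSpectrum (MvPowerSeries (Fin 2) ℤ_[p])) ≤ 1 := by
  refine Order.height_le_iff.mpr fun q hlast => ?_
  by_contra hlen
  push_neg at hlen
  have h2 : 1 < q.length := by exact_mod_cast hlen
  have hi01 : q.toFun ⟨0, by omega⟩ < q.toFun ⟨1, by omega⟩ := q.strictMono (by simp [Fin.lt_def])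
  have hi1last : q.toFun ⟨1, by omega⟩ < q.last := by
    have : (⟨1, by omega⟩ : Fin (q.length + 1)) < Fin.last q.length := by
      simp [Fin.lt_def]; omega
    exact q.strictMono this
  have hlt : q.toFun ⟨1, by omega⟩ < (⟨Ideal.span {f}, hP⟩ :
      PrimeSpectrum (MvPowerSeries (Fin 2) ℤ_[p])) := lt_of_lt_of_le hi1last hlast
  have hlt' : (q.toFun ⟨1, by omega⟩).asIdeal < Ideal.span {f} := hlt
  have hbot : (q.toFun ⟨1, by omega⟩).asIdeal = ⊥ :=
    prime_below_is_bot hf _ (q.toFun ⟨1, by omega⟩).isPrime hlt'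
  have : (q.toFun ⟨0, by omega⟩).asIdeal < (⊥ : Ideal (MvPowerSeries (Fin 2) ℤ_[p])) := by
    rw [← hbot]; exact hi01
  exact absurd this (not_lt_bot)

/-- Let `R = ℤ_p[[X, Y]]`, let `M` be a finitely generated
pseudo-null `R`-module and let `f ∈ R` be a prime element.  Then `M/fM` is a
torsion module over the integral domain `R/(f)`: every element of `M/fM` is
annihilated by some element of `R` that is nonzero modulo `(f)`. -/
theorem stmt3 (p : ℕ) [Fact p.Prime]
    (M : Type) [AddCommGroup M] [Module (MvPowerSeries (Fin 2) ℤ_[p]) M]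
    [Module.Finite (MvPowerSeries (Fin 2) ℤ_[p]) M]
    (hM : IsPseudoNull (MvPowerSeries (Fin 2) ℤ_[p]) M)
    (f : MvPowerSeries (Fin 2) ℤ_[p]) (hf : Prime f) :
    ∀ x : M ⧸ (Ideal.span {f} • ⊤ : Submodule (MvPowerSeries (Fin 2) ℤ_[p]) M),
      ∃ r : MvPowerSeries (Fin 2) ℤ_[p], r ∉ Ideal.span {f} ∧ r • x = 0 := by
  intro x
  have hP : (Ideal.span {f}).IsPrime := (Ideal.span_singleton_prime hf.ne_zero).mpr hf
  have hsub : Subsingleton (LocalizedModule (Ideal.span {f}).primeCompl M) :=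
    hM _ hP (height_span_le_one hf hP)
  obtain ⟨m, rfl⟩ := Submodule.Quotient.mk_surjective _ x
  have heq : (LocalizedModule.mk m 1 : LocalizedModule (Ideal.span {f}).primeCompl M)
      = LocalizedModule.mk 0 1 := Subsingleton.elim _ _
  obtain ⟨u, hu⟩ := LocalizedModule.mk_eq.mp heq
  refine ⟨u, u.2, ?_⟩
  have hum : (u : MvPowerSeries (Fin 2) ℤ_[p]) • m = 0 := by simpa [Submonoid.smul_def] using hu
  rw [← Submodule.Quotient.mk_smul, hum, Submodule.Quotient.mk_zero]
end

section
/- Let p be a prime number and let R = ℤ_p[[X,Y]] be the ring of formal power series in two variables over ℤ_p. Let f ∈ R be a prime element, let g_1, …, g_m ∈ R be elements with f ∤ g_i for all i, and suppose there is an exact sequence of R-modules 0 → S → ⊕_{i=1}^m R/(g_i) → N → 0 in which N is a finitely generated pseudo-null R-module. Then the quotient S/fS is a torsion module over the integral domain R/(f); that is, every element of S/fS is annihilated by some nonzero element of R/(f). -/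
/-- Let `R = ℤ_p[[X, Y]]`, let `f ∈ R` be a prime element, let
`g₁, …, g_m ∈ R` satisfy `f ∤ gᵢ`, and suppose that there is an exact sequence of
`R`-modules `0 → S → ⊕ᵢ R/(gᵢ) → N → 0` with `N` finitely generated pseudo-null.
Then `S/fS` is a torsion module over the integral domain `R/(f)`. -/
theorem stmt7 (p : ℕ) [Fact p.Prime] (m : ℕ)
    (f : MvPowerSeries (Fin 2) ℤ_[p]) (hf : Prime f)
    (g : Fin m → MvPowerSeries (Fin 2) ℤ_[p]) (hg : ∀ i, ¬ f ∣ g i)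
    (S N : Type) [AddCommGroup S] [Module (MvPowerSeries (Fin 2) ℤ_[p]) S]
    [AddCommGroup N] [Module (MvPowerSeries (Fin 2) ℤ_[p]) N]
    [Module.Finite (MvPowerSeries (Fin 2) ℤ_[p]) N]
    (hN : IsPseudoNull (MvPowerSeries (Fin 2) ℤ_[p]) N)
    (ι : S →ₗ[MvPowerSeries (Fin 2) ℤ_[p]]
      ((i : Fin m) → MvPowerSeries (Fin 2) ℤ_[p] ⧸ Ideal.span {g i}))
    (π : ((i : Fin m) → MvPowerSeries (Fin 2) ℤ_[p] ⧸ Ideal.span {g i})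
      →ₗ[MvPowerSeries (Fin 2) ℤ_[p]] N)
    (hι : Function.Injective ι) (hπ : Function.Surjective π)
    (hexact : LinearMap.range ι = LinearMap.ker π) :
    ∀ x : S ⧸ (Ideal.span {f} • ⊤ : Submodule (MvPowerSeries (Fin 2) ℤ_[p]) S),
      ∃ r : MvPowerSeries (Fin 2) ℤ_[p], r ∉ Ideal.span {f} ∧ r • x = 0 := by
  intro x
  refine ⟨∏ i, g i, ?_, ?_⟩
  · intro h
    rw [Ideal.mem_span_singleton] at h
    obtain ⟨i, -, hi⟩ := hf.exists_mem_finset_dvd h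
    exact hg i hi
  · obtain ⟨s, rfl⟩ := Submodule.Quotient.mk_surjective _ x
    have hs : (∏ i, g i) • s = 0 := by
      apply hι
      rw [map_smul, map_zero]
      funext i
      have hmem : (∏ i, g i) ∈ Ideal.span {g i} := by
        rw [Ideal.mem_span_singleton]
        exact Finset.dvd_prod_of_mem g (Finset.mem_univ i)
      calc ((∏ i, g i) • ι s) i = (∏ i, g i) • (ι s i) := rfl
        _ = Ideal.Quotient.mk (Ideal.span {g i}) (∏ i, g i) * (ι s i) := by
            rw [← Ideal.Quotient.algebraMap_eq, ← Algebra.smul_def]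
        _ = 0 := by
            rw [Ideal.Quotient.eq_zero_iff_mem.mpr hmem, zero_mul]
    rw [← Submodule.Quotient.mk_smul, hs, Submodule.Quotient.mk_zero]
end

section
/- Let p be a prime number and let R = ℤ_p[[X,Y]] be the ring of formal power series in two variables over ℤ_p. Let f ∈ R be a prime element and let M be a finitely generated R-module. If M/fM is a torsion module over R/(f) (every element of M/fM is annihilated by some nonzero element of R/(f)), then M is a torsion R-module (every element of M is annihilated by some nonzero element of R). -/
/-- Let `R = ℤ_p[[X, Y]]`, let `f ∈ R` be a prime element and let
`M` be a finitely generated `R`-module.  If `M/fM` is torsion over `R/(f)` (every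
element is annihilated by some element of `R` that is nonzero modulo `(f)`), then
`M` is a torsion `R`-module. -/
theorem stmt8 (p : ℕ) [Fact p.Prime]
    (f : MvPowerSeries (Fin 2) ℤ_[p]) (hf : Prime f)
    (M : Type) [AddCommGroup M] [Module (MvPowerSeries (Fin 2) ℤ_[p]) M]
    [Module.Finite (MvPowerSeries (Fin 2) ℤ_[p]) M]
    (htors : ∀ x : M ⧸ (Ideal.span {f} • ⊤ : Submodule (MvPowerSeries (Fin 2) ℤ_[p]) M),
      ∃ r : MvPowerSeries (Fin 2) ℤ_[p], r ∉ Ideal.span {f} ∧ r • x = 0) :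
    ∀ x : M, ∃ r : MvPowerSeries (Fin 2) ℤ_[p], r ≠ 0 ∧ r • x = 0 := by
  let R := MvPowerSeries (Fin 2) ℤ_[p]
  haveI hP : (Ideal.span {f} : Ideal R).IsPrime :=
    (Ideal.span_singleton_prime hf.ne_zero).mpr hf
  let S := (Ideal.span {f} : Ideal R).primeCompl
  let R' := Localization.AtPrime (Ideal.span {f} : Ideal R)
  let M' := LocalizedModule S M
  let ι : M →ₗ[R] M' := LocalizedModule.mkLinearMap S M
  have hfin : Module.Finite R' M' := Module.Finite.of_isLocalizedModule S ι
  have key : (⊤ : Submodule R' M') ≤ (IsLocalRing.maximalIdeal R') • ⊤ := by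
    intro x _
    obtain ⟨⟨m, s⟩, rfl⟩ := IsLocalizedModule.mk'_surjective S ι x
    obtain ⟨r, hr, hrx⟩ := htors (Submodule.Quotient.mk m)
    rw [← Submodule.Quotient.mk_smul, Submodule.Quotient.mk_eq_zero] at hrx
    have hιrm : ι (r • m) ∈ (IsLocalRing.maximalIdeal R') • (⊤ : Submodule R' M') := by
      refine Submodule.smul_induction_on hrx ?_ ?_
      · intro a ha n _
        have h1 : ι (a • n) = algebraMap R R' a • ι n := by
          rw [map_smul, algebraMap_smul]
        rw [h1]
        refine Submodule.smul_mem_smul ?_ Submodule.mem_top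
        rwa [IsLocalization.AtPrime.to_map_mem_maximal_iff R' (Ideal.span {f} : Ideal R)]
      · intro a b ha hb
        rw [map_add]; exact Submodule.add_mem _ ha hb
    have hrunit : IsUnit (algebraMap R R' r) := IsLocalization.map_units (M := S) R' ⟨r, hr⟩
    have hsunit : IsUnit (algebraMap R R' (s : R)) := IsLocalization.map_units (M := S) R' s
    have heq : IsLocalizedModule.mk' ι m s =
        (hrunit.unit⁻¹ * hsunit.unit⁻¹ : R') • ι (r • m) := by
      rw [map_smul, ← algebraMap_smul R' r (ι m), ← smul_assoc, smul_eq_mul,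
        mul_right_comm, IsUnit.val_inv_mul, one_mul]
      have h2 := IsLocalizedModule.mk'_cancel' ι m s
      rw [← h2, Submonoid.smul_def, ← algebraMap_smul R' (s : R), ← smul_assoc,
        smul_eq_mul, IsUnit.val_inv_mul, one_smul]
    show IsLocalizedModule.mk' ι m s ∈ _
    rw [heq]
    exact Submodule.smul_mem _ _ hιrm
  have hbot : (⊤ : Submodule R' M') = ⊥ :=
    Submodule.eq_bot_of_le_smul_of_le_jacobson_bot (IsLocalRing.maximalIdeal R') ⊤
      (Module.Finite.fg_top) key (by rw [IsLocalRing.jacobson_eq_maximalIdeal ⊥ bot_ne_top])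
  intro x
  have hx : ι x = 0 := by
    have hmem : ι x ∈ (⊤ : Submodule R' M') := Submodule.mem_top
    rw [hbot] at hmem; exact hmem
  obtain ⟨s, hs⟩ := (IsLocalizedModule.eq_zero_iff S ι).mp hx
  exact ⟨s, fun h => s.2 (h ▸ (Ideal.span {f} : Ideal R).zero_mem), hs⟩
end

section
/- Let p be a prime number and let a, b be natural numbers, not both zero, such that p ∤ a or p ∤ b. Then the element f_{a,b} = (1+X)^a·(1+Y)^b − 1 is a prime element of the ring ℤ_p[[X,Y]] of formal power series in two variables over ℤ_p. -/
set_option linter.unusedSectionVars false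

open MvPowerSeries Finsupp

namespace Stmt12Aux

variable {σ : Type*} [DecidableEq σ] [Fintype σ] {R : Type*} [CommRing R]



/-- The finset of exponents of degree at most `N`. -/
noncomputable def degLE (σ : Type*) [Fintype σ] (N : ℕ) : Finset (σ →₀ ℕ) :=
  (Finsupp.finite_of_degree_le (σ := σ) N).toFinset

lemma mem_degLE {N : ℕ} {e : σ →₀ ℕ} : e ∈ degLE σ N ↔ e.degree ≤ N :=
  Set.Finite.mem_toFinset _

lemma degree_add (u v : σ →₀ ℕ) : (u + v).degree = u.degree + v.degree := by
  simp only [Finsupp.degree_eq_weight_one, map_add]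

/-- The product `∏ G i ^ e i`. -/
noncomputable def gpow (G : σ → MvPowerSeries σ R) (e : σ →₀ ℕ) : MvPowerSeries σ R :=
  e.prod fun i k => G i ^ k

lemma gpow_zero (G : σ → MvPowerSeries σ R) : gpow G 0 = 1 := Finsupp.prod_zero_index

lemma gpow_add (G : σ → MvPowerSeries σ R) (e f : σ →₀ ℕ) : gpow G (e + f) = gpow G e * gpow G f :=
  Finsupp.prod_add_index' (fun i => pow_zero (G i)) (fun i k l => pow_add (G i) k l)

lemma gpow_single (G : σ → MvPowerSeries σ R) (i : σ) (n : ℕ) : gpow G (Finsupp.single i n) = G i ^ n :=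
  Finsupp.prod_single_index (pow_zero (G i))

variable {G : σ → MvPowerSeries σ R} (hG : ∀ i, constantCoeff (σ := σ) (R := R) (G i) = 0)
include hG

lemma one_le_order (i : σ) : 1 ≤ (G i).order := by
  apply MvPowerSeries.le_order
  intro d hd
  have : d.degree = 0 := by
    by_contra h
    have : (1 : ℕ∞) ≤ (d.degree : ℕ∞) := by
      exact_mod_cast Nat.one_le_iff_ne_zero.2 h
    exact absurd hd (not_lt.2 this)
  rw [Finsupp.degree_eq_zero_iff] at this
  subst this
  rw [MvPowerSeries.coeff_zero_eq_constantCoeff]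
  exact hG i

lemma le_order_gpow (e : σ →₀ ℕ) : (e.degree : ℕ∞) ≤ (gpow G e).order := by
  classical
  induction e using Finsupp.induction with
  | zero => simp [gpow_zero]
  | single_add i n f hif hn ih =>
      rw [gpow_add, degree_add, gpow_single]
      refine le_trans ?_ (MvPowerSeries.le_order_mul)
      push_cast
      refine add_le_add ?_ ih
      have : ∀ k : ℕ, (k : ℕ∞) ≤ ((G i) ^ k).order := by
        intro k
        induction k with
        | zero => simp
        | succ m ihm =>
            rw [pow_succ]
            refine le_trans ?_ MvPowerSeries.le_order_mul
            push_cast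
            exact add_le_add ihm (one_le_order hG i)
      simpa [Finsupp.degree_single, Finsupp.support_single_ne_zero _ hn] using this n

lemma coeff_gpow_eq_zero {d e : σ →₀ ℕ} (h : d.degree < e.degree) :
    coeff (R := R) d (gpow G e) = 0 := by
  apply MvPowerSeries.coeff_of_lt_order
  exact lt_of_lt_of_le (by exact_mod_cast h) (le_order_gpow hG e)

/-- Substitution of the family `G` into a power series. -/
noncomputable def substFun (G : σ → MvPowerSeries σ R) (h : MvPowerSeries σ R) : MvPowerSeries σ R :=
  fun d => ∑ e ∈ degLE σ d.degree, coeff (R := R) e h * coeff (R := R) d (gpow G e)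

omit hG in
lemma coeff_substFun (h : MvPowerSeries σ R) (d : σ →₀ ℕ) :
    coeff (R := R) d (substFun G h) = ∑ e ∈ degLE σ d.degree, coeff (R := R) e h * coeff (R := R) d (gpow G e) :=
  rfl

lemma coeff_substFun_superset {d : σ →₀ ℕ} {S : Finset (σ →₀ ℕ)} (hS : degLE σ d.degree ⊆ S)
    (h : MvPowerSeries σ R) :
    coeff (R := R) d (substFun G h) = ∑ e ∈ S, coeff (R := R) e h * coeff (R := R) d (gpow G e) := by
  rw [coeff_substFun]
  refine Finset.sum_subset hS (fun e _ he => ?_)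
  rw [coeff_gpow_eq_zero hG (by simpa [mem_degLE, not_le] using he), mul_zero]

omit hG in
lemma substFun_add (h₁ h₂ : MvPowerSeries σ R) :
    substFun G (h₁ + h₂) = substFun G h₁ + substFun G h₂ := by
  ext d
  simp only [coeff_substFun, map_add, add_mul, Finset.sum_add_distrib]

lemma substFun_monomial (e : σ →₀ ℕ) (c : R) :
    substFun G (monomial (R := R) e c) = C (σ := σ) (R := R) c * gpow G e := by
  ext d
  rw [coeff_substFun, MvPowerSeries.coeff_C_mul]
  by_cases hle : e.degree ≤ d.degree
  · rw [Finset.sum_eq_single e]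
    · rw [MvPowerSeries.coeff_monomial_same]
    · intro e' _ hne
      rw [MvPowerSeries.coeff_monomial_ne hne, zero_mul]
    · intro habs
      exact absurd (mem_degLE.2 hle) habs
  · rw [coeff_gpow_eq_zero hG (not_le.1 hle), mul_zero]
    refine Finset.sum_eq_zero (fun e' he' => ?_)
    have : e' ≠ e := by
      rintro rfl
      exact hle (mem_degLE.1 he')
    rw [MvPowerSeries.coeff_monomial_ne this, zero_mul]

lemma substFun_one : substFun G (1 : MvPowerSeries σ R) = 1 := by
  have := substFun_monomial (G := G) hG 0 (1 : R)
  simpa [gpow_zero, monomial_zero_eq_C_apply, map_one] using this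

lemma substFun_C (c : R) : substFun G (C (σ := σ) (R := R) c) = C (σ := σ) (R := R) c := by
  have := substFun_monomial (G := G) hG 0 c
  simpa [gpow_zero, monomial_zero_eq_C_apply] using this

lemma constantCoeff_substFun (h : MvPowerSeries σ R) :
    constantCoeff (σ := σ) (R := R) (substFun G h) = constantCoeff (σ := σ) (R := R) h := by
  rw [← MvPowerSeries.coeff_zero_eq_constantCoeff_apply, coeff_substFun]
  rw [show degLE σ (Finsupp.degree (0 : σ →₀ ℕ)) = {0} from ?_]
  · simp [gpow_zero]
  · ext e
    simp only [mem_degLE, Finset.mem_singleton, map_zero, Nat.le_zero,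
      Finsupp.degree_eq_zero_iff]

omit hG in
/-- Locality: the coefficient of `substFun G h` at `d` only depends on coefficients
of `h` in degrees at most `degree d`. -/
lemma coeff_substFun_congr {h₁ h₂ : MvPowerSeries σ R} {d : σ →₀ ℕ}
    (hagree : ∀ e : σ →₀ ℕ, e.degree ≤ d.degree → coeff (R := R) e h₁ = coeff (R := R) e h₂) :
    coeff (R := R) d (substFun G h₁) = coeff (R := R) d (substFun G h₂) := by
  rw [coeff_substFun, coeff_substFun]
  refine Finset.sum_congr rfl (fun e he => ?_)
  rw [hagree e (mem_degLE.1 he)]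


lemma substFun_coe (P : MvPolynomial σ R) :
    substFun G (P : MvPowerSeries σ R) = MvPolynomial.eval₂ (C (σ := σ) (R := R)) G P := by
  induction P using MvPolynomial.induction_on' with
  | monomial e c =>
      rw [MvPolynomial.coe_monomial, substFun_monomial hG, MvPolynomial.eval₂_monomial]
      rfl
  | add p q hp hq =>
      rw [MvPolynomial.coe_add, substFun_add, MvPolynomial.eval₂_add, hp, hq]

/-- Truncation in total degree, as a polynomial. -/
noncomputable def truncD (N : ℕ) (h : MvPowerSeries σ R) : MvPolynomial σ R :=
  ∑ e ∈ degLE σ N, MvPolynomial.monomial e (coeff (R := R) e h)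

omit hG in
lemma coeff_truncD {N : ℕ} {e : σ →₀ ℕ} (he : e.degree ≤ N) (h : MvPowerSeries σ R) :
    coeff (R := R) e ((truncD N h : MvPolynomial σ R) : MvPowerSeries σ R) = coeff (R := R) e h := by
  rw [truncD, ← MvPolynomial.coeToMvPowerSeries.ringHom_apply, map_sum, map_sum]
  simp only [MvPolynomial.coeToMvPowerSeries.ringHom_apply]
  rw [Finset.sum_eq_single e]
  · rw [MvPolynomial.coe_monomial, MvPowerSeries.coeff_monomial_same]
  · intro e' _ hne
    rw [MvPolynomial.coe_monomial, MvPowerSeries.coeff_monomial_ne (Ne.symm hne)]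
  · intro habs
    exact absurd (mem_degLE.2 he) habs

omit hG in
lemma coeff_mul_congr {g₁ g₂ h₁ h₂ : MvPowerSeries σ R} {d : σ →₀ ℕ}
    (hg : ∀ e : σ →₀ ℕ, e.degree ≤ d.degree → coeff (R := R) e g₁ = coeff (R := R) e g₂)
    (hh : ∀ e : σ →₀ ℕ, e.degree ≤ d.degree → coeff (R := R) e h₁ = coeff (R := R) e h₂) :
    coeff (R := R) d (g₁ * h₁) = coeff (R := R) d (g₂ * h₂) := by
  rw [MvPowerSeries.coeff_mul, MvPowerSeries.coeff_mul]
  refine Finset.sum_congr rfl (fun uv huv => ?_)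
  rw [Finset.HasAntidiagonal.mem_antidiagonal] at huv
  have hd : uv.1.degree + uv.2.degree = d.degree := by rw [← degree_add, huv]
  rw [hg uv.1 (by omega), hh uv.2 (by omega)]

lemma substFun_mul (h₁ h₂ : MvPowerSeries σ R) :
    substFun G (h₁ * h₂) = substFun G h₁ * substFun G h₂ := by
  ext d
  set N := d.degree with hN
  have key1 : coeff (R := R) d (substFun G (h₁ * h₂))
      = coeff (R := R) d (substFun G ((truncD N h₁ * truncD N h₂ : MvPolynomial σ R) :
        MvPowerSeries σ R)) := by
    refine coeff_substFun_congr (fun e he => ?_)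
    rw [MvPolynomial.coe_mul]
    refine (coeff_mul_congr (fun e' he' => ?_) (fun e' he' => ?_)).symm <;>
      exact coeff_truncD (le_trans he' he) _
  have key2 : coeff (R := R) d (substFun G h₁ * substFun G h₂)
      = coeff (R := R) d (substFun G ((truncD N h₁ : MvPolynomial σ R) : MvPowerSeries σ R)
        * substFun G ((truncD N h₂ : MvPolynomial σ R) : MvPowerSeries σ R)) := by
    refine coeff_mul_congr (fun e he => ?_) (fun e he => ?_) <;>
      exact (coeff_substFun_congr (fun e' he' =>
        (coeff_truncD (le_trans he' he) _).symm))
  rw [key1, key2, substFun_coe hG, substFun_coe hG, substFun_coe hG,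
    MvPolynomial.eval₂_mul]

/-- Substitution as a ring homomorphism. -/
noncomputable def substHom (G : σ → MvPowerSeries σ R)
    (hG : ∀ i, constantCoeff (σ := σ) (R := R) (G i) = 0) :
    MvPowerSeries σ R →+* MvPowerSeries σ R :=
  RingHom.mk' { toFun := substFun G, map_one' := substFun_one hG, map_mul' := substFun_mul hG }
    substFun_add

omit hG in
lemma substHom_apply {hG : ∀ i, constantCoeff (σ := σ) (R := R) (G i) = 0} (h : MvPowerSeries σ R) :
    substHom G hG h = substFun G h := rfl

lemma substFun_X (i : σ) : substFun G (X i : MvPowerSeries σ R) = G i := by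
  rw [MvPowerSeries.X_def, substFun_monomial hG, gpow_single, pow_one, map_one, one_mul]

omit hG in
lemma gpow_X (e : σ →₀ ℕ) :
    gpow (fun i => (X i : MvPowerSeries σ R)) e = monomial (R := R) e 1 := by
  classical
  induction e using Finsupp.induction with
  | zero => rw [gpow_zero]; exact (MvPowerSeries.monomial_zero_one (R := R) (σ := σ)).symm ▸ rfl
  | single_add i n f hif hn ih =>
      rw [gpow_add, gpow_single, ih, MvPowerSeries.X_pow_eq,
        MvPowerSeries.monomial_mul_monomial, one_mul]

omit hG in
lemma substFun_X_family (h : MvPowerSeries σ R) :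
    substFun (fun i => (X i : MvPowerSeries σ R)) h = h := by
  ext d
  rw [coeff_substFun]
  rw [Finset.sum_eq_single d]
  · rw [gpow_X, MvPowerSeries.coeff_monomial_same, mul_one]
  · intro e _ hne
    rw [gpow_X, MvPowerSeries.coeff_monomial_ne (Ne.symm hne), mul_zero]
  · intro habs
    exact absurd (mem_degLE.2 le_rfl) habs

/-- Composition of substitutions. -/
lemma substFun_comp {G' : σ → MvPowerSeries σ R}
    (hG' : ∀ i, constantCoeff (σ := σ) (R := R) (G' i) = 0) (h : MvPowerSeries σ R) :
    substFun G (substFun G' h) = substFun (fun i => substFun G (G' i)) h := by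
  have hG'' : ∀ i, constantCoeff (σ := σ) (R := R) (substFun G (G' i)) = 0 := by
    intro i; rw [constantCoeff_substFun hG]; exact hG' i
  ext d
  set N := d.degree with hN
  set P : MvPolynomial σ R := truncD N h with hP
  have step1 : coeff (R := R) d (substFun G (substFun G' h))
      = coeff (R := R) d (substFun G (substFun G' (P : MvPowerSeries σ R))) := by
    refine coeff_substFun_congr (fun e he => ?_)
    exact coeff_substFun_congr (fun e' he' => (coeff_truncD (le_trans he' he) _).symm)
  have step2 : coeff (R := R) d (substFun (fun i => substFun G (G' i)) h)
      = coeff (R := R) d (substFun (fun i => substFun G (G' i)) (P : MvPowerSeries σ R)) := by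
    exact coeff_substFun_congr (fun e he => (coeff_truncD he _).symm)
  rw [step1, step2, substFun_coe hG', substFun_coe hG'']
  have h1 : substFun G (MvPolynomial.eval₂ (C (σ := σ) (R := R)) G' P)
      = (substHom G hG) (MvPolynomial.eval₂ (C (σ := σ) (R := R)) G' P) := rfl
  have hhom : (substHom G hG).comp (C (σ := σ) (R := R)) = C (σ := σ) (R := R) := by
    refine RingHom.ext (fun c => ?_)
    exact substFun_C hG c
  rw [h1, MvPolynomial.eval₂_comp_left (substHom G hG), hhom]
  rfl


omit hG

section PrimeX

variable (s : σ)

/-- "Evaluation at `X s := 0`" (as a function). -/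
noncomputable def evalZeroFun (s : σ) (h : MvPowerSeries σ R) : MvPowerSeries σ R :=
  fun d => if d s = 0 then h d else 0

lemma coeff_evalZeroFun (h : MvPowerSeries σ R) (d : σ →₀ ℕ) :
    coeff (R := R) d (evalZeroFun s h) = if d s = 0 then coeff (R := R) d h else 0 := rfl

/-- "Evaluation at `X s := 0`" as a ring homomorphism. -/
noncomputable def evalZero (s : σ) : MvPowerSeries σ R →+* MvPowerSeries σ R :=
  RingHom.mk'
    { toFun := evalZeroFun s
      map_one' := by
        ext d
        rw [coeff_evalZeroFun]
        by_cases h : d s = 0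
        · rw [if_pos h]
        · rw [if_neg h, MvPowerSeries.coeff_one, if_neg]
          rintro rfl
          exact h rfl
      map_mul' := fun g h => by
        ext d
        rw [coeff_evalZeroFun, MvPowerSeries.coeff_mul]
        by_cases hd : d s = 0
        · rw [if_pos hd, MvPowerSeries.coeff_mul]
          refine Finset.sum_congr rfl (fun uv huv => ?_)
          rw [Finset.HasAntidiagonal.mem_antidiagonal] at huv
          have h1 : uv.1 s = 0 ∧ uv.2 s = 0 := by
            have : uv.1 s + uv.2 s = d s := by rw [← Finsupp.add_apply, huv]
            omega
          rw [coeff_evalZeroFun, coeff_evalZeroFun, if_pos h1.1, if_pos h1.2]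
        · rw [if_neg hd]
          refine (Finset.sum_eq_zero (fun uv huv => ?_)).symm
          simp only [Finset.HasAntidiagonal.mem_antidiagonal] at huv
          have : uv.1 s + uv.2 s = d s := by rw [← Finsupp.add_apply, huv]
          rcases Nat.eq_zero_or_pos (uv.1 s) with h1 | h1
          · have h2 : uv.2 s ≠ 0 := by omega
            rw [coeff_evalZeroFun s h, if_neg h2, mul_zero]
          · have h2 : uv.1 s ≠ 0 := by omega
            rw [coeff_evalZeroFun s g, if_neg h2, zero_mul] }
    (fun g h => by
      ext d
      show coeff (R := R) d (evalZeroFun s (g + h)) = coeff (R := R) d (evalZeroFun s g + evalZeroFun s h)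
      rw [map_add, coeff_evalZeroFun, coeff_evalZeroFun, coeff_evalZeroFun, map_add]
      by_cases hd : d s = 0
      · rw [if_pos hd, if_pos hd, if_pos hd]
      · rw [if_neg hd, if_neg hd, if_neg hd, add_zero])

lemma coeff_evalZero (h : MvPowerSeries σ R) (d : σ →₀ ℕ) :
    coeff (R := R) d (evalZero s h) = if d s = 0 then coeff (R := R) d h else 0 := rfl

lemma X_dvd_iff_evalZero (h : MvPowerSeries σ R) :
    (X s : MvPowerSeries σ R) ∣ h ↔ evalZero s h = 0 := by
  constructor
  · rintro ⟨q, rfl⟩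
    ext d
    rw [coeff_evalZero, map_zero]
    by_cases hd : d s = 0
    · rw [if_pos hd, MvPowerSeries.X_def, MvPowerSeries.coeff_monomial_mul, if_neg]
      intro hle
      have := (Finsupp.single_le_iff).1 hle
      omega
    · rw [if_neg hd]
  · intro h0
    refine ⟨show MvPowerSeries σ R from fun d => coeff (R := R) (d + Finsupp.single s 1) h, ?_⟩
    ext d
    rw [MvPowerSeries.X_def, MvPowerSeries.coeff_monomial_mul]
    by_cases hle : Finsupp.single s 1 ≤ d
    · rw [if_pos hle, one_mul]
      simp only [MvPowerSeries.coeff_apply]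
      exact congrArg h (tsub_add_cancel_of_le hle).symm
    · rw [if_neg hle]
      have hd : d s = 0 := by
        by_contra hne
        exact hle (Finsupp.single_le_iff.2 (by omega))
      have := congrArg (fun t => coeff (R := R) d t) h0
      simpa [coeff_evalZero, hd] using this

lemma ker_evalZero :
    RingHom.ker (evalZero (R := R) s) = Ideal.span {(X s : MvPowerSeries σ R)} := by
  ext h
  rw [RingHom.mem_ker, Ideal.mem_span_singleton, X_dvd_iff_evalZero]

lemma X_ne_zero [Nontrivial R] : (X s : MvPowerSeries σ R) ≠ 0 := by
  intro h
  have := congrArg (fun t => coeff (R := R) (Finsupp.single s 1) t) h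
  simpa [MvPowerSeries.coeff_X] using this

instance [IsDomain R] : IsDomain (MvPowerSeries σ R) :=
  NoZeroDivisors.to_isDomain _

lemma prime_X [IsDomain R] : Prime (X s : MvPowerSeries σ R) := by
  have hX0 : (X s : MvPowerSeries σ R) ≠ 0 := X_ne_zero s
  rw [← Ideal.span_singleton_prime hX0, ← ker_evalZero]
  rw [← Ideal.Quotient.isDomain_iff_prime]
  exact Function.Injective.isDomain _ (RingHom.kerLift_injective (evalZero (R := R) s))

end PrimeX


section TwoVars

variable (R)

/-- The unit `1 + X i` of `R[[X₀, X₁]]`. -/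
noncomputable def U (i : Fin 2) : (MvPowerSeries (Fin 2) R)ˣ :=
  (show IsUnit (1 + X i : MvPowerSeries (Fin 2) R) by
    rw [MvPowerSeries.isUnit_iff_constantCoeff, map_add, MvPowerSeries.constantCoeff_one,
      MvPowerSeries.constantCoeff_X, add_zero]
    exact isUnit_one).unit

lemma U_val (i : Fin 2) : (U R i : MvPowerSeries (Fin 2) R) = 1 + X i :=
  IsUnit.unit_spec _

lemma collapse {Gp : Type*} [CommGroup Gp] (u v : Gp) (α β s t γ δ : ℤ) :
    (u ^ α * v ^ β) ^ γ * (u ^ s * v ^ t) ^ δ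
      = u ^ (α * γ + s * δ) * v ^ (β * γ + t * δ) := by
  rw [mul_zpow, mul_zpow, zpow_add, zpow_add, zpow_mul, zpow_mul, zpow_mul, zpow_mul]
  rw [mul_mul_mul_comm]

/-- The substitution family corresponding to an integer matrix. -/
noncomputable def gfam (α β γ δ : ℤ) : Fin 2 → MvPowerSeries (Fin 2) R :=
  ![(↑(U R 0 ^ α * U R 1 ^ β) : MvPowerSeries (Fin 2) R) - 1,
    (↑(U R 0 ^ γ * U R 1 ^ δ) : MvPowerSeries (Fin 2) R) - 1]

lemma constantCoeff_Uzpow (α β : ℤ) :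
    constantCoeff (σ := Fin 2) (R := R) (↑(U R 0 ^ α * U R 1 ^ β) : MvPowerSeries (Fin 2) R) = 1 := by
  have hU : ∀ i, Units.map (constantCoeff (σ := Fin 2) (R := R)).toMonoidHom (U R i) = 1 := by
    intro i
    refine Units.ext ?_
    rw [Units.coe_map, Units.val_one]
    show constantCoeff (σ := Fin 2) (R := R) (U R i : MvPowerSeries (Fin 2) R) = 1
    rw [U_val, map_add, MvPowerSeries.constantCoeff_one, MvPowerSeries.constantCoeff_X, add_zero]
  have : constantCoeff (σ := Fin 2) (R := R) (↑(U R 0 ^ α * U R 1 ^ β) : MvPowerSeries (Fin 2) R)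
      = ↑(Units.map (constantCoeff (σ := Fin 2) (R := R)).toMonoidHom (U R 0 ^ α * U R 1 ^ β)) := by
    rw [Units.coe_map]; rfl
  rw [this, map_mul, map_zpow, map_zpow, hU, hU, one_zpow, one_zpow, one_mul, Units.val_one]

lemma hgfam (α β γ δ : ℤ) :
    ∀ i, constantCoeff (σ := Fin 2) (R := R) (gfam R α β γ δ i) = 0 := by
  intro i
  fin_cases i
  · show constantCoeff (σ := Fin 2) (R := R) ((↑(U R 0 ^ α * U R 1 ^ β) : MvPowerSeries (Fin 2) R) - 1) = 0
    rw [map_sub, constantCoeff_Uzpow, map_one, sub_self]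
  · show constantCoeff (σ := Fin 2) (R := R) ((↑(U R 0 ^ γ * U R 1 ^ δ) : MvPowerSeries (Fin 2) R) - 1) = 0
    rw [map_sub, constantCoeff_Uzpow, map_one, sub_self]

/-- The change-of-variables ring homomorphism attached to an integer matrix. -/
noncomputable def chg (α β γ δ : ℤ) :
    MvPowerSeries (Fin 2) R →+* MvPowerSeries (Fin 2) R :=
  substHom (gfam R α β γ δ) (hgfam R α β γ δ)

lemma mapU0 (α β γ δ : ℤ) :
    Units.map (chg R α β γ δ).toMonoidHom (U R 0) = U R 0 ^ α * U R 1 ^ β := by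
  refine Units.ext ?_
  rw [Units.coe_map]
  show (chg R α β γ δ) (U R 0 : MvPowerSeries (Fin 2) R) = _
  rw [U_val, map_add, map_one]
  show 1 + substFun (gfam R α β γ δ) (X 0) = _
  rw [substFun_X (hgfam R α β γ δ) 0]
  show 1 + ((↑(U R 0 ^ α * U R 1 ^ β) : MvPowerSeries (Fin 2) R) - 1) = _
  ring

lemma mapU1 (α β γ δ : ℤ) :
    Units.map (chg R α β γ δ).toMonoidHom (U R 1) = U R 0 ^ γ * U R 1 ^ δ := by
  refine Units.ext ?_
  rw [Units.coe_map]
  show (chg R α β γ δ) (U R 1 : MvPowerSeries (Fin 2) R) = _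
  rw [U_val, map_add, map_one]
  show 1 + substFun (gfam R α β γ δ) (X 1) = _
  rw [substFun_X (hgfam R α β γ δ) 1]
  show 1 + ((↑(U R 0 ^ γ * U R 1 ^ δ) : MvPowerSeries (Fin 2) R) - 1) = _
  ring

lemma chg_unit_comb (α β γ δ a' b' : ℤ) :
    chg R α β γ δ ((↑(U R 0 ^ a' * U R 1 ^ b') : MvPowerSeries (Fin 2) R) - 1)
      = (↑(U R 0 ^ (α * a' + γ * b') * U R 1 ^ (β * a' + δ * b')) :
          MvPowerSeries (Fin 2) R) - 1 := by
  rw [map_sub, map_one]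
  congr 1
  have h1 : chg R α β γ δ (↑(U R 0 ^ a' * U R 1 ^ b') : MvPowerSeries (Fin 2) R)
      = ↑(Units.map (chg R α β γ δ).toMonoidHom (U R 0 ^ a' * U R 1 ^ b')) := by
    rw [Units.coe_map]; rfl
  rw [h1, map_mul, map_zpow, map_zpow, mapU0, mapU1, collapse]

lemma chg_comp_chg_eq_id {α β γ δ α' β' γ' δ' : ℤ}
    (h00 : α * α' + γ * β' = 1) (h01 : β * α' + δ * β' = 0)
    (h10 : α * γ' + γ * δ' = 0) (h11 : β * γ' + δ * δ' = 1) :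
    (chg R α β γ δ).comp (chg R α' β' γ' δ') = RingHom.id _ := by
  refine RingHom.ext (fun h => ?_)
  rw [RingHom.comp_apply, RingHom.id_apply]
  show substFun (gfam R α β γ δ) (substFun (gfam R α' β' γ' δ') h) = h
  rw [substFun_comp (hgfam R α β γ δ) (hgfam R α' β' γ' δ')]
  have hfam : (fun i => substFun (gfam R α β γ δ) (gfam R α' β' γ' δ' i))
      = fun i => (X i : MvPowerSeries (Fin 2) R) := by
    funext i
    fin_cases i
    · show substFun (gfam R α β γ δ)
        ((↑(U R 0 ^ α' * U R 1 ^ β') : MvPowerSeries (Fin 2) R) - 1) = _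
      rw [show substFun (gfam R α β γ δ)
          ((↑(U R 0 ^ α' * U R 1 ^ β') : MvPowerSeries (Fin 2) R) - 1)
          = chg R α β γ δ ((↑(U R 0 ^ α' * U R 1 ^ β') : MvPowerSeries (Fin 2) R) - 1) from rfl,
        chg_unit_comb, h00, h01, zpow_one, zpow_zero, mul_one, U_val]
      show (1 : MvPowerSeries (Fin 2) R) + X 0 - 1 = X 0
      ring
    · show substFun (gfam R α β γ δ)
        ((↑(U R 0 ^ γ' * U R 1 ^ δ') : MvPowerSeries (Fin 2) R) - 1) = _
      rw [show substFun (gfam R α β γ δ)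
          ((↑(U R 0 ^ γ' * U R 1 ^ δ') : MvPowerSeries (Fin 2) R) - 1)
          = chg R α β γ δ ((↑(U R 0 ^ γ' * U R 1 ^ δ') : MvPowerSeries (Fin 2) R) - 1) from rfl,
        chg_unit_comb, h10, h11, zpow_zero, zpow_one, one_mul, U_val]
      show (1 : MvPowerSeries (Fin 2) R) + X 1 - 1 = X 1
      ring
  rw [hfam, substFun_X_family]

/-- The change-of-variables ring automorphism attached to a matrix in `GL₂(ℤ)`. -/
noncomputable def chgEquiv (α β γ δ α' β' γ' δ' : ℤ)
    (h00 : α * α' + γ * β' = 1) (h01 : β * α' + δ * β' = 0)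
    (h10 : α * γ' + γ * δ' = 0) (h11 : β * γ' + δ * δ' = 1)
    (h00' : α' * α + γ' * β = 1) (h01' : β' * α + δ' * β = 0)
    (h10' : α' * γ + γ' * δ = 0) (h11' : β' * γ + δ' * δ = 1) :
    MvPowerSeries (Fin 2) R ≃+* MvPowerSeries (Fin 2) R :=
  RingEquiv.ofRingHom (chg R α β γ δ) (chg R α' β' γ' δ')
    (chg_comp_chg_eq_id R h00 h01 h10 h11)
    (chg_comp_chg_eq_id R h00' h01' h10' h11')

end TwoVars


end Stmt12Aux

open Stmt12Aux in
/-- Let `a, b` be natural numbers, not both zero, with `p ∤ a` or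
`p ∤ b`.  Then `f_{a,b} = (1+X)^a·(1+Y)^b − 1` is a prime element of `ℤ_p[[X, Y]]`. -/
theorem stmt12 (p : ℕ) [Fact p.Prime] (a b : ℕ) (hab : ¬ (a = 0 ∧ b = 0))
    (hp : ¬ (p : ℕ) ∣ a ∨ ¬ (p : ℕ) ∣ b) :
    Prime ((1 + MvPowerSeries.X (0 : Fin 2)) ^ a * (1 + MvPowerSeries.X (1 : Fin 2)) ^ b - 1 :
      MvPowerSeries (Fin 2) ℤ_[p]) := by
  classical
  set R := ℤ_[p]
  set g : ℕ := a.gcd b with hg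
  have hg0 : g ≠ 0 := by
    intro h
    exact hab ⟨Nat.eq_zero_of_gcd_eq_zero_left h, Nat.eq_zero_of_gcd_eq_zero_right h⟩
  have hpg : ¬ p ∣ g := by
    intro hd
    rcases hp with h | h
    · exact h (hd.trans (Nat.gcd_dvd_left a b))
    · exact h (hd.trans (Nat.gcd_dvd_right a b))
  -- Bézout data
  have hco : Nat.Coprime (a / g) (b / g) :=
    Nat.coprime_div_gcd_div_gcd (Nat.pos_of_ne_zero hg0)
  set A : ℤ := ((a / g : ℕ) : ℤ) with hA
  set B : ℤ := ((b / g : ℕ) : ℤ) with hB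
  obtain ⟨x, y, hxy⟩ : IsCoprime A B := Nat.isCoprime_iff_coprime.mpr hco
  have hAg : A * (g : ℤ) = (a : ℤ) := by
    rw [hA, ← Nat.cast_mul, Nat.div_mul_cancel (Nat.gcd_dvd_left a b)]
  have hBg : B * (g : ℤ) = (b : ℤ) := by
    rw [hB, ← Nat.cast_mul, Nat.div_mul_cancel (Nat.gcd_dvd_right a b)]
  -- the change-of-variables automorphism
  let Φ : MvPowerSeries (Fin 2) R ≃+* MvPowerSeries (Fin 2) R :=
    chgEquiv R A B (-y) x x (-B) y A
      (by linear_combination hxy) (by ring) (by ring) (by linear_combination hxy)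
      (by linear_combination hxy) (by ring) (by ring) (by linear_combination hxy)
  -- the prime `(1+X₀)^g - 1`
  set f0 : MvPowerSeries (Fin 2) R := (1 + MvPowerSeries.X (0 : Fin 2)) ^ g - 1 with hf0
  have hprime0 : Prime f0 := by
    set w : MvPowerSeries (Fin 2) R :=
      ∑ i ∈ Finset.range g, (1 + MvPowerSeries.X (0 : Fin 2)) ^ i with hw
    have hfw : f0 = w * MvPowerSeries.X (0 : Fin 2) := by
      have := geom_sum_mul (1 + MvPowerSeries.X (0 : Fin 2) : MvPowerSeries (Fin 2) R) g
      rw [add_sub_cancel_left] at this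
      rw [hf0, ← this]
    have hwunit : IsUnit w := by
      rw [MvPowerSeries.isUnit_iff_constantCoeff]
      have hcc : MvPowerSeries.constantCoeff (σ := Fin 2) (R := R) w = (g : R) := by
        rw [hw, map_sum]
        have : ∀ i ∈ Finset.range g,
            MvPowerSeries.constantCoeff (σ := Fin 2) (R := R) ((1 + MvPowerSeries.X (0 : Fin 2)) ^ i)
              = 1 := by
          intro i _
          rw [map_pow, map_add, MvPowerSeries.constantCoeff_one,
            MvPowerSeries.constantCoeff_X, add_zero, one_pow]
        rw [Finset.sum_congr rfl this, Finset.sum_const, Finset.card_range, nsmul_eq_mul,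
          mul_one]
      rw [hcc]
      -- `g` is a `p`-adic unit
      rw [PadicInt.isUnit_iff]
      refine le_antisymm (PadicInt.norm_le_one _) (not_lt.1 ?_)
      intro hlt
      have : ((g : ℤ) : ℤ_[p]) = ((g : ℕ) : ℤ_[p]) := by push_cast; rfl
      rw [← this] at hlt
      have := (PadicInt.norm_int_lt_one_iff_dvd (g : ℤ)).1 hlt
      exact hpg (Int.natCast_dvd_natCast.mp this)
    have hassoc : Associated (MvPowerSeries.X (0 : Fin 2) : MvPowerSeries (Fin 2) R) f0 := by
      refine ⟨hwunit.unit, ?_⟩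
      rw [IsUnit.unit_spec, hfw]
      ring
    exact hassoc.prime (prime_X (R := R) 0)
  -- transport along `Φ`
  have himg : Φ f0
      = (1 + MvPowerSeries.X (0 : Fin 2)) ^ a * (1 + MvPowerSeries.X (1 : Fin 2)) ^ b - 1 := by
    have hf0' : f0 = (↑(U R 0 ^ (g : ℤ) * U R 1 ^ (0 : ℤ)) : MvPowerSeries (Fin 2) R) - 1 := by
      rw [zpow_zero, mul_one, zpow_natCast, hf0]
      have hval : ((U R 0 ^ g : (MvPowerSeries (Fin 2) R)ˣ) : MvPowerSeries (Fin 2) R)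
          = (1 + MvPowerSeries.X (0 : Fin 2)) ^ g := by
        rw [Units.val_pow_eq_pow_val, U_val]
      rw [hval]
    have hchg : Φ f0 = chg R A B (-y) x f0 := rfl
    rw [hchg, hf0', chg_unit_comb]
    have e1 : A * (g : ℤ) + -y * 0 = (a : ℤ) := by rw [mul_zero, add_zero, hAg]
    have e2 : B * (g : ℤ) + x * 0 = (b : ℤ) := by rw [mul_zero, add_zero, hBg]
    rw [e1, e2]
    have hval2 : ((U R 0 ^ (a : ℤ) * U R 1 ^ (b : ℤ) : (MvPowerSeries (Fin 2) R)ˣ) :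
          MvPowerSeries (Fin 2) R)
        = (1 + MvPowerSeries.X (0 : Fin 2)) ^ a * (1 + MvPowerSeries.X (1 : Fin 2)) ^ b := by
      rw [zpow_natCast, zpow_natCast, Units.val_mul, Units.val_pow_eq_pow_val,
        Units.val_pow_eq_pow_val, U_val, U_val]
    rw [hval2]
  rw [← himg]
  exact ((MulEquiv.prime_iff Φ.toMulEquiv).mpr hprime0)
end

section
/- Let p be a prime number and let a, b be natural numbers, not both zero, such that p ∤ a or p ∤ b. Then there is a ring isomorphism ℤ_p[[X,Y]]/(f_{a,b}) ≅ ℤ_p[[T]], where f_{a,b} = (1+X)^a·(1+Y)^b − 1 and ℤ_p[[T]] is the ring of formal power series in one variable over ℤ_p. -/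
open PowerSeries

namespace Stmt13Aux

section Adic

variable {R : Type*} [CommRing R]

lemma mem_span_X_pow {n : ℕ} {f : R⟦X⟧} :
    f ∈ (Ideal.span {(X : R⟦X⟧)}) ^ n ↔ ∀ m < n, coeff m f = 0 := by
  rw [Ideal.span_singleton_pow, Ideal.mem_span_singleton, X_pow_dvd_iff]

lemma smodeq_iff {I : Ideal R} {n : ℕ} {c d : R} :
    c ≡ d [SMOD (I ^ n • ⊤ : Submodule R R)] ↔ c - d ∈ I ^ n := by
  rw [SModEq.sub_mem, smul_eq_mul, Ideal.mul_top]

instance : IsAdicComplete (Ideal.span {(X : R⟦X⟧)}) R⟦X⟧ where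
  haus' := by
    intro f hf
    ext m
    have := smodeq_iff.mp (hf (m + 1))
    rw [sub_zero] at this
    simpa using mem_span_X_pow.mp this m (Nat.lt_succ_self m)
  prec' := by
    intro f hf
    refine ⟨PowerSeries.mk fun n => coeff n (f (n + 1)), fun n => smodeq_iff.mpr ?_⟩
    rw [mem_span_X_pow]
    intro m hm
    have h1 : f (m + 1) - f n ∈ (Ideal.span {(X : R⟦X⟧)}) ^ (m + 1) :=
      smodeq_iff.mp (hf (Nat.succ_le_of_lt hm))
    have h2 := mem_span_X_pow.mp h1 m (Nat.lt_succ_self m)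
    simp only [map_sub, coeff_mk, sub_eq_zero] at h2 ⊢
    rw [← h2]

end Adic


variable {p : ℕ} [Fact p.Prime]

lemma isUnit_natCast_padic {b : ℕ} (hb : ¬ p ∣ b) : IsUnit (b : ℤ_[p]) := by
  rw [PadicInt.isUnit_iff]
  by_contra h
  have hle : ‖(b : ℤ_[p])‖ ≤ 1 := PadicInt.norm_le_one _
  have hlt : ‖(b : ℤ_[p])‖ < 1 := lt_of_le_of_ne hle h
  have : ((b : ℤ) : ℤ_[p]) = (b : ℤ_[p]) := by push_cast; ring
  rw [← this, PadicInt.norm_int_lt_one_iff_dvd] at hlt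
  exact hb (Int.natCast_dvd_natCast.mp hlt)

lemma constCoeff_one_add_X_pow (a : ℕ) :
    constantCoeff (((1 : ℤ_[p]⟦X⟧) + X) ^ a) = 1 := by
  simp [map_pow]

lemma exists_s (a b : ℕ) (hb : ¬ p ∣ b) :
    ∃ s : ℤ_[p]⟦X⟧, constantCoeff s = 0 ∧
      ((1 : ℤ_[p]⟦X⟧) + X) ^ a * (1 + s) ^ b = 1 := by
  classical
  have hb0 : b ≠ 0 := fun h => hb (h ▸ dvd_zero p)
  set I : Ideal ℤ_[p]⟦X⟧ := Ideal.span {(X : ℤ_[p]⟦X⟧)} with hI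
  -- the inverse u of (1+X)^a
  set u : ℤ_[p]⟦X⟧ := invOfUnit (((1 : ℤ_[p]⟦X⟧) + X) ^ a) 1 with hu
  have hmulu : ((1 : ℤ_[p]⟦X⟧) + X) ^ a * u = 1 :=
    mul_invOfUnit _ 1 (by simpa using constCoeff_one_add_X_pow a)
  have hcu : constantCoeff u = 1 := by
    have := congrArg (constantCoeff (R := ℤ_[p])) hmulu
    rw [map_mul, constCoeff_one_add_X_pow, one_mul, map_one] at this
    exact this
  -- Hensel's lemma
  have hhens : HenselianRing ℤ_[p]⟦X⟧ I := inferInstance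
  set f : Polynomial ℤ_[p]⟦X⟧ := Polynomial.X ^ b - Polynomial.C u with hf
  have hmonic : f.Monic := Polynomial.monic_X_pow_sub_C u hb0
  have heval : f.eval 1 ∈ I := by
    rw [hf]
    simp only [Polynomial.eval_sub, Polynomial.eval_pow, Polynomial.eval_X, Polynomial.eval_C,
      one_pow]
    rw [hI, Ideal.mem_span_singleton, X_dvd_iff]
    simp [hcu]
  have hderiv : IsUnit (Ideal.Quotient.mk I (f.derivative.eval 1)) := by
    have hd : f.derivative.eval 1 = (b : ℤ_[p]⟦X⟧) := by
      rw [hf]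
      simp [Polynomial.derivative_sub, Polynomial.derivative_X_pow]
    rw [hd]
    have : IsUnit ((b : ℕ) : ℤ_[p]⟦X⟧) := by
      have := (isUnit_natCast_padic hb).map (PowerSeries.C (R := ℤ_[p]))
      rwa [map_natCast] at this
    exact this.map (Ideal.Quotient.mk I)
  obtain ⟨v, hroot, hv1⟩ := hhens.is_henselian f hmonic 1 heval hderiv
  have hvb : v ^ b = u := by
    have := hroot
    rw [Polynomial.IsRoot, hf] at this
    simp only [Polynomial.eval_sub, Polynomial.eval_pow, Polynomial.eval_X,
      Polynomial.eval_C, sub_eq_zero] at this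
    exact this
  refine ⟨v - 1, ?_, ?_⟩
  · rw [hI, Ideal.mem_span_singleton, X_dvd_iff] at hv1
    exact hv1
  · rw [add_sub_cancel, hvb, hmulu]


section Mv

variable {R : Type*} [CommRing R]

/-- The inclusion `R⟦X⟧ → MvPowerSeries (Fin 2) R` sending `X` to the variable `x`. -/
noncomputable def iota (x : Fin 2) : R⟦X⟧ →+* MvPowerSeries (Fin 2) R :=
  (HahnSeries.toMvPowerSeries.toRingHom).comp
    ((HahnSeries.embDomainRingHom (Finsupp.singleAddHom x)
        (Finsupp.single_injective x)
        (fun m n => by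
          simp [Finsupp.single_le_iff])).comp
      HahnSeries.toPowerSeries.symm.toRingHom)

lemma coeff_iota_single (x : Fin 2) (h : R⟦X⟧) (n : ℕ) :
    MvPowerSeries.coeff (Finsupp.single x n) (iota x h) = PowerSeries.coeff n h := by
  rw [iota]
  simp only [RingHom.coe_comp, Function.comp_apply, RingEquiv.toRingHom_eq_coe,
    RingEquiv.coe_toRingHom, HahnSeries.embDomainRingHom_apply]
  rw [HahnSeries.coeff_toMvPowerSeries]
  have : Finsupp.single x n = ((⟨⟨(Finsupp.singleAddHom x : ℕ →+ (Fin 2 →₀ ℕ)),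
      Finsupp.single_injective x⟩, fun {m n} => by
        show Finsupp.single x m ≤ Finsupp.single x n ↔ m ≤ n; simp [Finsupp.single_le_iff]⟩ : ℕ ↪o (Fin 2 →₀ ℕ)) n) := rfl
  rw [this]
  erw [HahnSeries.embDomain_coeff, HahnSeries.coeff_toPowerSeries_symm]

lemma coeff_iota_ne {x y : Fin 2} (hxy : x ≠ y) (h : R⟦X⟧) (d : Fin 2 →₀ ℕ)
    (hd : d y ≠ 0) : MvPowerSeries.coeff d (iota x h) = 0 := by
  rw [iota]
  simp only [RingHom.coe_comp, Function.comp_apply, RingEquiv.toRingHom_eq_coe,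
    RingEquiv.coe_toRingHom, HahnSeries.embDomainRingHom_apply]
  rw [HahnSeries.coeff_toMvPowerSeries]
  apply HahnSeries.embDomain_notin_range
  rintro ⟨n, hn⟩
  apply hd
  have : (Finsupp.single x n : Fin 2 →₀ ℕ) = d := hn
  rw [← this, Finsupp.single_apply, if_neg hxy]

lemma fin2_eq {x y : Fin 2} (hxy : x ≠ y) (u : Fin 2) : u = x ∨ u = y := by
  have hx := x.isLt
  have hy := y.isLt
  have hu := u.isLt
  have hne : x.val ≠ y.val := fun h => hxy (Fin.ext h)
  have : u.val = x.val ∨ u.val = y.val := by omega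
  rcases this with h | h
  · exact Or.inl (Fin.ext h)
  · exact Or.inr (Fin.ext h)

lemma decomp {x y : Fin 2} (hxy : x ≠ y) (d : Fin 2 →₀ ℕ) :
    d = Finsupp.single x (d x) + Finsupp.single y (d y) := by
  ext u
  rcases fin2_eq hxy u with rfl | rfl
  · simp [Finsupp.single_apply, hxy.symm]
  · simp [Finsupp.single_apply, hxy]

lemma coeff_iota {x y : Fin 2} (hxy : x ≠ y) (h : R⟦X⟧) (d : Fin 2 →₀ ℕ) :
    MvPowerSeries.coeff d (iota x h) =
      if d y = 0 then PowerSeries.coeff (d x) h else 0 := by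
  split
  · next h0 =>
      have hd : d = Finsupp.single x (d x) := by
        conv_lhs => rw [decomp hxy d]
        rw [h0, Finsupp.single_zero, add_zero]
      rw [hd, coeff_iota_single]
      simp
  · next h0 => exact coeff_iota_ne hxy h d h0

/-- the `j`-th slice (in the `y` variable) of a 2-variable power series -/
noncomputable def sl (x y : Fin 2) (j : ℕ) (m : MvPowerSeries (Fin 2) R) : R⟦X⟧ :=
  PowerSeries.mk fun i => MvPowerSeries.coeff (Finsupp.single x i + Finsupp.single y j) m

lemma coeff_sl (x y : Fin 2) (j i : ℕ) (m : MvPowerSeries (Fin 2) R) :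
    PowerSeries.coeff i (sl x y j m) =
      MvPowerSeries.coeff (Finsupp.single x i + Finsupp.single y j) m := by
  rw [sl, coeff_mk]

lemma sl_add (x y : Fin 2) (j : ℕ) (m1 m2 : MvPowerSeries (Fin 2) R) :
    sl x y j (m1 + m2) = sl x y j m1 + sl x y j m2 := by
  ext i; simp [coeff_sl]

lemma sl_sub (x y : Fin 2) (j : ℕ) (m1 m2 : MvPowerSeries (Fin 2) R) :
    sl x y j (m1 - m2) = sl x y j m1 - sl x y j m2 := by
  ext i; simp [coeff_sl]

lemma sl_iota_zero {x y : Fin 2} (hxy : x ≠ y) (h : R⟦X⟧) :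
    sl x y 0 (iota x h) = h := by
  ext i
  rw [coeff_sl, Finsupp.single_zero, add_zero, coeff_iota_single]

lemma sl_iota_succ {x y : Fin 2} (hxy : x ≠ y) (h : R⟦X⟧) (j : ℕ) :
    sl x y (j + 1) (iota x h) = 0 := by
  ext i
  rw [coeff_sl, coeff_iota_ne hxy]
  · simp
  · simp [Finsupp.single_apply, if_neg hxy]

lemma sl_mul_X_zero {x y : Fin 2} (hxy : x ≠ y) (m : MvPowerSeries (Fin 2) R) :
    sl x y 0 (m * MvPowerSeries.X y) = 0 := by
  ext i
  rw [coeff_sl, Finsupp.single_zero, add_zero, MvPowerSeries.X_def,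
    MvPowerSeries.coeff_mul_monomial, if_neg]
  · simp
  · rw [Finsupp.single_le_iff, Finsupp.single_apply, if_neg hxy]
    omega

lemma sl_mul_X_succ {x y : Fin 2} (hxy : x ≠ y) (m : MvPowerSeries (Fin 2) R) (j : ℕ) :
    sl x y (j + 1) (m * MvPowerSeries.X y) = sl x y j m := by
  ext i
  rw [coeff_sl, coeff_sl]
  have hd : Finsupp.single x i + Finsupp.single y (j + 1) =
      (Finsupp.single x i + Finsupp.single y j) + Finsupp.single y 1 := by
    rw [Finsupp.single_add, add_assoc]
  rw [hd, MvPowerSeries.X_def, MvPowerSeries.coeff_add_mul_monomial, mul_one]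

lemma sl_mul_iota {x y : Fin 2} (hxy : x ≠ y) (m : MvPowerSeries (Fin 2) R)
    (h : R⟦X⟧) (j : ℕ) :
    sl x y j (m * iota x h) = sl x y j m * h := by
  classical
  ext i
  rw [coeff_sl, PowerSeries.coeff_mul, MvPowerSeries.coeff_mul]
  set D := Finsupp.single x i + Finsupp.single y j with hD
  have hDx : D x = i := by simp [hD, Finsupp.single_apply, if_neg hxy.symm]
  have hDy : D y = j := by simp [hD, Finsupp.single_apply, if_neg hxy]
  have hstep : ∀ q ∈ Finset.HasAntidiagonal.antidiagonal D,
      MvPowerSeries.coeff q.1 m * MvPowerSeries.coeff q.2 (iota x h) =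
      if q.2 y = 0 then MvPowerSeries.coeff q.1 m * PowerSeries.coeff (q.2 x) h else 0 := by
    intro q _
    rw [coeff_iota hxy]
    split <;> simp
  rw [Finset.sum_congr rfl hstep, Finset.sum_ite, Finset.sum_const_zero, add_zero]
  have hmem : ∀ q ∈ (Finset.HasAntidiagonal.antidiagonal D).filter (fun q => q.2 y = 0),
      q.1 = Finsupp.single x (q.1 x) + Finsupp.single y j ∧
        q.2 = Finsupp.single x (q.2 x) := by
    intro q hq
    rw [Finset.mem_filter, Finset.HasAntidiagonal.mem_antidiagonal] at hq
    obtain ⟨hsum, hq2y⟩ := hq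
    have hq1y : q.1 y = j := by
      have := congrArg (fun f => f y) hsum
      simp only [Finsupp.add_apply] at this
      rw [hq2y, add_zero] at this
      rw [this, hDy]
    constructor
    · conv_lhs => rw [decomp hxy q.1]
      rw [hq1y]
    · conv_lhs => rw [decomp hxy q.2]
      rw [hq2y, Finsupp.single_zero, add_zero]
  refine Finset.sum_nbij' (fun q => (q.1 x, q.2 x))
    (fun k => (Finsupp.single x k.1 + Finsupp.single y j, Finsupp.single x k.2)) ?_ ?_ ?_ ?_ ?_
  · intro q hq
    have hq' := hq
    rw [Finset.mem_filter, Finset.HasAntidiagonal.mem_antidiagonal] at hq'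
    rw [Finset.HasAntidiagonal.mem_antidiagonal]
    have := congrArg (fun f => f x) hq'.1
    simp only [Finsupp.add_apply] at this
    rw [hDx] at this
    exact this
  · intro k hk
    rw [Finset.HasAntidiagonal.mem_antidiagonal] at hk
    rw [Finset.mem_filter, Finset.HasAntidiagonal.mem_antidiagonal]
    constructor
    · ext u
      rcases fin2_eq hxy u with rfl | rfl
      · simp [hD, Finsupp.single_apply, if_neg hxy.symm, ← hk]
      · simp [hD, Finsupp.single_apply, if_neg hxy]
    · simp [Finsupp.single_apply, if_neg hxy]
  · intro q hq
    obtain ⟨h1, h2⟩ := hmem q hq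
    exact Prod.ext (by dsimp only; exact h1.symm) (by dsimp only; exact h2.symm)
  · intro k hk
    simp [Finsupp.single_apply, if_neg hxy, if_neg hxy.symm]
  · intro q hq
    obtain ⟨h1, h2⟩ := hmem q hq
    dsimp only
    rw [coeff_sl, ← h1]

lemma coeff_mul_eq_of_agree {A B h0 : R⟦X⟧} {i : ℕ}
    (hab : ∀ k ≤ i, PowerSeries.coeff k A = PowerSeries.coeff k B) :
    PowerSeries.coeff i (A * h0) = PowerSeries.coeff i (B * h0) := by
  rw [PowerSeries.coeff_mul, PowerSeries.coeff_mul]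
  refine Finset.sum_congr rfl fun k hk => ?_
  rw [Finset.HasAntidiagonal.mem_antidiagonal] at hk
  rw [hab k.1 (by omega)]

lemma coeff_mul_pow_eq_zero {A s : R⟦X⟧} (hs : constantCoeff s = 0) {i m : ℕ}
    (him : i < m) : PowerSeries.coeff i (A * s ^ m) = 0 := by
  have h1 : (X : R⟦X⟧) ∣ s := X_dvd_iff.mpr hs
  have h2 : (X : R⟦X⟧) ^ m ∣ A * s ^ m :=
    Dvd.dvd.mul_left (pow_dvd_pow_of_dvd h1 m) A
  exact X_pow_dvd_iff.mp h2 i him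

/-- auxiliary quotient-slices -/
noncomputable def qsAux (s : R⟦X⟧) (G : ℕ → R⟦X⟧) (j : ℕ) : R⟦X⟧ :=
  PowerSeries.mk fun i =>
    PowerSeries.coeff i (∑ m ∈ Finset.range (i + 1), G (j + m + 1) * s ^ m)

lemma coeff_qsAux {s : R⟦X⟧} (hs : constantCoeff s = 0) (G : ℕ → R⟦X⟧) (j i N : ℕ)
    (hN : i < N) :
    PowerSeries.coeff i (qsAux s G j) =
      PowerSeries.coeff i (∑ m ∈ Finset.range N, G (j + m + 1) * s ^ m) := by
  rw [qsAux, coeff_mk, map_sum, map_sum]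
  apply Finset.sum_subset
  · exact Finset.range_subset_range.mpr (by omega)
  · intro m hm hnm
    rw [Finset.mem_range] at hm
    rw [Finset.mem_range] at hnm
    exact coeff_mul_pow_eq_zero hs (by omega)

lemma qsAux_rec {s : R⟦X⟧} (hs : constantCoeff s = 0) (G : ℕ → R⟦X⟧) (j : ℕ) :
    qsAux s G j = G (j + 1) + qsAux s G (j + 1) * s := by
  ext i
  rw [map_add, coeff_qsAux hs G j i (i + 2) (by omega)]
  have hsplit : (∑ m ∈ Finset.range (i + 2), G (j + m + 1) * s ^ m) =
      G (j + 1) + (∑ m ∈ Finset.range (i + 1), G ((j + 1) + m + 1) * s ^ m) * s := by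
    rw [Finset.sum_range_succ' (fun m => G (j + m + 1) * s ^ m) (i + 1)]
    rw [Finset.sum_mul]
    rw [add_comm]
    congr 1
    · simp
    · refine Finset.sum_congr rfl fun m _ => ?_
      have harg : j + (m + 1) + 1 = j + 1 + m + 1 := by omega
      rw [pow_succ, ← mul_assoc, harg]
  rw [hsplit, map_add]
  congr 1
  exact coeff_mul_eq_of_agree fun k hk =>
    (coeff_qsAux hs G (j + 1) k (i + 1) (by omega)).symm

/-- the quotient of division by `X y - iota x s` -/
noncomputable def qq (x y : Fin 2) (s : R⟦X⟧) (g : MvPowerSeries (Fin 2) R) :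
    MvPowerSeries (Fin 2) R :=
  fun d => PowerSeries.coeff (d x) (qsAux s (fun j => sl x y j g) (d y))

lemma sl_qq {x y : Fin 2} (hxy : x ≠ y) (s : R⟦X⟧) (g : MvPowerSeries (Fin 2) R) (j : ℕ) :
    sl x y j (qq x y s g) = qsAux s (fun j => sl x y j g) j := by
  ext i
  rw [coeff_sl, MvPowerSeries.coeff_apply]
  show PowerSeries.coeff ((Finsupp.single x i + Finsupp.single y j) x) _ = _
  simp [Finsupp.single_apply, if_neg hxy, if_neg hxy.symm]

lemma slices_eq {x y : Fin 2} (hxy : x ≠ y) {m1 m2 : MvPowerSeries (Fin 2) R}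
    (h : ∀ j, sl x y j m1 = sl x y j m2) : m1 = m2 := by
  apply MvPowerSeries.ext
  intro d
  have := congrArg (PowerSeries.coeff (d x)) (h (d y))
  rw [coeff_sl, coeff_sl, ← decomp hxy d] at this
  exact this

lemma division {x y : Fin 2} (hxy : x ≠ y) {s : R⟦X⟧} (hs : constantCoeff s = 0)
    (g : MvPowerSeries (Fin 2) R) :
    g = iota x (sl x y 0 g + qsAux s (fun j => sl x y j g) 0 * s) +
      qq x y s g * (MvPowerSeries.X y - iota x s) := by
  apply slices_eq hxy
  intro j
  rw [mul_sub, sl_add, sl_sub]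
  cases j with
  | zero =>
      rw [sl_iota_zero hxy, sl_mul_X_zero hxy, sl_mul_iota hxy, sl_qq hxy]
      ring
  | succ j =>
      rw [sl_iota_succ hxy, sl_mul_X_succ hxy, sl_mul_iota hxy, sl_qq hxy, sl_qq hxy]
      rw [qsAux_rec hs (fun j => sl x y j g) j]
      ring

lemma division_unique {x y : Fin 2} (hxy : x ≠ y) {s : R⟦X⟧} (hs : constantCoeff s = 0)
    (h : R⟦X⟧) (q : MvPowerSeries (Fin 2) R)
    (heq : iota x h = q * (MvPowerSeries.X y - iota x s)) : h = 0 := by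
  have hrec : ∀ j, sl x y j q = sl x y (j + 1) q * s := by
    intro j
    have := congrArg (sl x y (j + 1)) heq
    rw [sl_iota_succ hxy, mul_sub, sl_sub, sl_mul_X_succ hxy, sl_mul_iota hxy] at this
    have := this.symm
    rw [sub_eq_zero] at this
    exact this
  have hiter : ∀ j, sl x y 0 q = sl x y j q * s ^ j := by
    intro j
    induction j with
    | zero => simp
    | succ j ih =>
        rw [ih, hrec j, mul_assoc, ← pow_succ']
  have hzero : sl x y 0 q = 0 := by
    ext i
    rw [hiter (i + 1), map_zero]
    exact coeff_mul_pow_eq_zero hs (by omega)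
  have := congrArg (sl x y 0) heq
  rw [sl_iota_zero hxy, mul_sub, sl_sub, sl_mul_X_zero hxy, sl_mul_iota hxy, hzero] at this
  simpa using this

end Mv

section Main

variable {p : ℕ} [Fact p.Prime]

lemma const_iota (x : Fin 2) {y : Fin 2} (hxy : x ≠ y) (h : ℤ_[p]⟦X⟧) :
    MvPowerSeries.constantCoeff (iota x h) = constantCoeff h := by
  rw [← MvPowerSeries.coeff_zero_eq_constantCoeff_apply, coeff_iota hxy]
  simp

lemma iota_X {x y : Fin 2} (hxy : x ≠ y) :
    iota x (PowerSeries.X : ℤ_[p]⟦X⟧) = MvPowerSeries.X x := by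
  classical
  apply MvPowerSeries.ext; intro d
  rw [coeff_iota hxy, MvPowerSeries.coeff_X, PowerSeries.coeff_X]
  by_cases h1 : d = Finsupp.single x 1
  · subst h1
    simp [Finsupp.single_apply, if_neg hxy]
  · rw [if_neg h1]
    by_cases h2 : d y = 0
    · rw [if_pos h2, if_neg]
      intro h3
      apply h1
      conv_lhs => rw [decomp hxy d]
      rw [h3, h2, Finsupp.single_zero, add_zero]
    · rw [if_neg h2]

lemma main (x y : Fin 2) (hxy : x ≠ y) (a b : ℕ) (hb : ¬ p ∣ b) :
    Nonempty ((MvPowerSeries (Fin 2) ℤ_[p] ⧸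
        Ideal.span {((1 + MvPowerSeries.X x) ^ a *
          (1 + MvPowerSeries.X y) ^ b - 1 : MvPowerSeries (Fin 2) ℤ_[p])}) ≃+*
      PowerSeries ℤ_[p]) := by
  classical
  obtain ⟨s, hs0, hs⟩ := exists_s a b hb
  set t : MvPowerSeries (Fin 2) ℤ_[p] := MvPowerSeries.X y - iota x s with ht
  have hiA : iota x (((1 : ℤ_[p]⟦X⟧) + PowerSeries.X) ^ a) =
      (1 + MvPowerSeries.X x) ^ a := by
    rw [map_pow, map_add, map_one, iota_X hxy]
  set w : MvPowerSeries (Fin 2) ℤ_[p] :=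
    iota x (((1 : ℤ_[p]⟦X⟧) + PowerSeries.X) ^ a) *
      ∑ i ∈ Finset.range b,
        (1 + MvPowerSeries.X y) ^ i * (iota x (1 + s)) ^ (b - 1 - i) with hw
  have hVv : (1 + MvPowerSeries.X y) - iota x (1 + s) = t := by
    rw [map_add, map_one, ht]
    ring
  have hgeom : (∑ i ∈ Finset.range b,
      (1 + MvPowerSeries.X y) ^ i * (iota x (1 + s)) ^ (b - 1 - i)) * t =
      (1 + MvPowerSeries.X y) ^ b - (iota x (1 + s)) ^ b := by
    rw [← hVv]
    exact geom_sum₂_mul _ _ b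
  have h2 : (1 + MvPowerSeries.X x) ^ a * (iota x (1 + s)) ^ b = 1 := by
    rw [← hiA, ← map_pow, ← map_mul, hs, map_one]
  have hkey : (1 + MvPowerSeries.X x) ^ a * (1 + MvPowerSeries.X y) ^ b - 1 = w * t := by
    calc (1 + MvPowerSeries.X x) ^ a * (1 + MvPowerSeries.X y) ^ b - 1
        = (1 + MvPowerSeries.X x) ^ a *
            ((1 + MvPowerSeries.X y) ^ b - (iota x (1 + s)) ^ b) +
          ((1 + MvPowerSeries.X x) ^ a * (iota x (1 + s)) ^ b - 1) := by ring
      _ = (1 + MvPowerSeries.X x) ^ a *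
            ((∑ i ∈ Finset.range b,
              (1 + MvPowerSeries.X y) ^ i * (iota x (1 + s)) ^ (b - 1 - i)) * t) + 0 := by
          rw [hgeom, h2, sub_self]
      _ = w * t := by rw [hw, hiA]; ring
  have hcw : MvPowerSeries.constantCoeff w = (b : ℤ_[p]) := by
    rw [hw, map_mul, map_sum, const_iota x hxy, constCoeff_one_add_X_pow, one_mul]
    have : ∀ i ∈ Finset.range b,
        MvPowerSeries.constantCoeff
          ((1 + MvPowerSeries.X y) ^ i * (iota x (1 + s)) ^ (b - 1 - i)) = 1 := by
      intro i _
      rw [map_mul, map_pow, map_pow, map_add, map_one, MvPowerSeries.constantCoeff_X,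
        const_iota x hxy, map_add, map_one, hs0]
      simp
    rw [Finset.sum_congr rfl this]
    simp
  have hwu : IsUnit w :=
    MvPowerSeries.isUnit_iff_constantCoeff.mpr (hcw ▸ isUnit_natCast_padic hb)
  have hspan : Ideal.span {((1 + MvPowerSeries.X x) ^ a *
      (1 + MvPowerSeries.X y) ^ b - 1 : MvPowerSeries (Fin 2) ℤ_[p])} = Ideal.span {t} := by
    rw [hkey]
    exact Ideal.span_singleton_mul_left_unit hwu t
  let ψ : PowerSeries ℤ_[p] →+* (MvPowerSeries (Fin 2) ℤ_[p] ⧸ Ideal.span {t}) :=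
    (Ideal.Quotient.mk (Ideal.span {t})).comp (iota x)
  have hinj : Function.Injective ψ := by
    intro h1 h2 hψ
    rw [← sub_eq_zero]
    have hmem : iota x (h1 - h2) ∈ Ideal.span {t} := by
      rw [map_sub]
      exact (Ideal.Quotient.eq (I := Ideal.span {t})).mp hψ
    obtain ⟨c, hc⟩ := Ideal.mem_span_singleton'.mp hmem
    exact division_unique hxy hs0 _ c hc.symm
  have hsurj : Function.Surjective ψ := by
    intro z
    obtain ⟨g, rfl⟩ := Ideal.Quotient.mk_surjective z
    refine ⟨sl x y 0 g + qsAux s (fun j => sl x y j g) 0 * s, ?_⟩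
    show Ideal.Quotient.mk _ (iota x _) = _
    conv_rhs => rw [division hxy hs0 g]
    rw [Ideal.Quotient.eq]
    have hm : qq x y s g * (MvPowerSeries.X y - iota x s) ∈ Ideal.span {t} :=
      Ideal.mem_span_singleton'.mpr ⟨qq x y s g, rfl⟩
    have heq2 : iota x (sl x y 0 g + qsAux s (fun j => sl x y j g) 0 * s) -
        (iota x (sl x y 0 g + qsAux s (fun j => sl x y j g) 0 * s) +
          qq x y s g * (MvPowerSeries.X y - iota x s)) =
        -(qq x y s g * (MvPowerSeries.X y - iota x s)) := by ring
    rw [heq2]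
    exact neg_mem hm
  exact ⟨(Ideal.quotEquivOfEq hspan).trans
    (RingEquiv.ofBijective ψ ⟨hinj, hsurj⟩).symm⟩

end Main

end Stmt13Aux

/-- Let `a, b` be natural numbers, not both zero, with `p ∤ a` or
`p ∤ b`.  Then there is a ring isomorphism `ℤ_p[[X, Y]]/(f_{a,b}) ≅ ℤ_p[[T]]`, where
`f_{a,b} = (1+X)^a·(1+Y)^b − 1`. -/
theorem stmt13 (p : ℕ) [Fact p.Prime] (a b : ℕ) (hab : ¬ (a = 0 ∧ b = 0))
    (hp : ¬ (p : ℕ) ∣ a ∨ ¬ (p : ℕ) ∣ b) :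
    Nonempty ((MvPowerSeries (Fin 2) ℤ_[p] ⧸
        Ideal.span {((1 + MvPowerSeries.X (0 : Fin 2)) ^ a *
          (1 + MvPowerSeries.X (1 : Fin 2)) ^ b - 1 : MvPowerSeries (Fin 2) ℤ_[p])}) ≃+*
      PowerSeries ℤ_[p]) := by
  rcases hp with ha | hb
  · rw [show ((1 + MvPowerSeries.X (0 : Fin 2)) ^ a *
        (1 + MvPowerSeries.X (1 : Fin 2)) ^ b - 1 : MvPowerSeries (Fin 2) ℤ_[p]) =
        (1 + MvPowerSeries.X (1 : Fin 2)) ^ b *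
        (1 + MvPowerSeries.X (0 : Fin 2)) ^ a - 1 from by ring]
    exact Stmt13Aux.main 1 0 (by decide) b a ha
  · exact Stmt13Aux.main 0 1 (by decide) a b hb
end

section
/- Let p be a prime number and let (a,b) and (a',b') be pairs of natural numbers, each pair not both zero, satisfying (p ∤ a or p ∤ b) and (p ∤ a' or p ∤ b'), and suppose a·b' ≠ a'·b. Then the elements f_{a,b} = (1+X)^a(1+Y)^b − 1 and f_{a',b'} = (1+X)^{a'}(1+Y)^{b'} − 1 of ℤ_p[[X,Y]] are coprime: every common divisor of f_{a,b} and f_{a',b'} in ℤ_p[[X,Y]] is a unit. -/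
open MvPowerSeries Finset

section Proj

variable {σ : Type*} [DecidableEq σ] {R : Type*} [CommRing R]

/-- Projection onto the coefficients whose exponent at `s` is zero. -/
noncomputable def projAux (s : σ) (f : MvPowerSeries σ R) : MvPowerSeries σ R :=
  fun m => if m s = 0 then f m else 0

lemma coeff_projAux (s : σ) (f : MvPowerSeries σ R) (m : σ →₀ ℕ) :
    MvPowerSeries.coeff m (projAux s f) = if m s = 0 then MvPowerSeries.coeff m f else 0 :=
  rfl

lemma projAux_mul (s : σ) (f g : MvPowerSeries σ R) :
    projAux s (f * g) = projAux s f * projAux s g := by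
  ext m
  rw [coeff_projAux, MvPowerSeries.coeff_mul, MvPowerSeries.coeff_mul]
  by_cases hm : m s = 0
  · rw [if_pos hm]
    apply Finset.sum_congr rfl
    rintro ⟨u, v⟩ huv
    rw [Finset.HasAntidiagonal.mem_antidiagonal] at huv
    have hu : u s = 0 := by
      have := congrArg (fun w : σ →₀ ℕ => w s) huv
      simp only [Finsupp.add_apply] at this
      omega
    have hv : v s = 0 := by
      have := congrArg (fun w : σ →₀ ℕ => w s) huv
      simp only [Finsupp.add_apply] at this
      omega
    simp only [coeff_projAux, if_pos hu, if_pos hv]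
  · rw [if_neg hm]
    symm
    apply Finset.sum_eq_zero
    rintro ⟨u, v⟩ huv
    rw [Finset.HasAntidiagonal.mem_antidiagonal] at huv
    have hsum : u s + v s = m s := by
      have := congrArg (fun w : σ →₀ ℕ => w s) huv
      simpa using this
    by_cases hu : u s = 0
    · have hv : v s ≠ 0 := by omega
      simp only [coeff_projAux, if_neg hv, mul_zero]
    · simp only [coeff_projAux, if_neg hu, zero_mul]

lemma X_prime_mv [NoZeroDivisors R] [Nontrivial R] (s : σ) :
    Prime (MvPowerSeries.X s : MvPowerSeries σ R) := by
  refine ⟨?_, ?_, ?_⟩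
  · intro h
    have := congrArg (MvPowerSeries.coeff (Finsupp.single s 1)) h
    rw [MvPowerSeries.coeff_X, if_pos rfl] at this
    simp at this
  · rw [MvPowerSeries.isUnit_iff_constantCoeff, MvPowerSeries.constantCoeff_X]
    exact not_isUnit_zero
  · intro f g hfg
    rw [MvPowerSeries.X_dvd_iff] at hfg
    have h0 : projAux s f * projAux s g = 0 := by
      rw [← projAux_mul]
      ext m
      rw [coeff_projAux]
      by_cases hm : m s = 0
      · rw [if_pos hm, hfg m hm, map_zero]
      · rw [if_neg hm, map_zero]
    rcases mul_eq_zero.mp h0 with h | h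
    · left
      rw [MvPowerSeries.X_dvd_iff]
      intro m hm
      have := congrArg (MvPowerSeries.coeff m) h
      rw [coeff_projAux, if_pos hm, map_zero] at this
      exact this
    · right
      rw [MvPowerSeries.X_dvd_iff]
      intro m hm
      have := congrArg (MvPowerSeries.coeff m) h
      rw [coeff_projAux, if_pos hm, map_zero] at this
      exact this

end Proj

section Field

variable {p : ℕ} [Fact p.Prime]

lemma common_div_X_pow_unit {q : ℕ} {e : MvPowerSeries (Fin 2) (ZMod p)}
    (h0 : e ∣ MvPowerSeries.X (0 : Fin 2) ^ q)
    (h1 : e ∣ MvPowerSeries.X (1 : Fin 2) ^ q) : IsUnit e := by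
  haveI : IsDomain (MvPowerSeries (Fin 2) (ZMod p)) := NoZeroDivisors.to_isDomain _
  obtain ⟨i, hi, hassoc⟩ := (dvd_prime_pow (X_prime_mv (0 : Fin 2)) q).mp h0
  rcases Nat.eq_zero_or_pos i with rfl | hipos
  · rw [pow_zero] at hassoc
    exact isUnit_of_dvd_unit hassoc.dvd isUnit_one
  · exfalso
    have hXe : MvPowerSeries.X (0 : Fin 2) ∣ e :=
      dvd_trans (dvd_pow_self _ hipos.ne') hassoc.symm.dvd
    have hX01 : MvPowerSeries.X (0 : Fin 2) ∣ MvPowerSeries.X (1 : Fin 2) :=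
      (X_prime_mv (0 : Fin 2)).dvd_of_dvd_pow (dvd_trans hXe h1)
    rw [MvPowerSeries.X_dvd_iff] at hX01
    have h := hX01 (Finsupp.single (1 : Fin 2) 1) (by simp [Finsupp.single_apply])
    rw [MvPowerSeries.coeff_X, if_pos rfl] at h
    simp at h

end Field

section Main

variable {p : ℕ} [Fact p.Prime]

lemma dvd_of_dvd_mul_unit {R : Type*} [CommRing R] {d a u : R} (hu : IsUnit u)
    (h : d ∣ a * u) : d ∣ a := (hu.dvd_mul_right).mp h

/-- Key step: a common divisor of `(1+X)^N - 1` and `(1+Y)^N - 1` with `N ≠ 0` is a unit. -/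
lemma key_lemma (N : ℕ) (hN : N ≠ 0) (d : MvPowerSeries (Fin 2) ℤ_[p])
    (h0 : d ∣ (1 + MvPowerSeries.X (0 : Fin 2)) ^ N - 1)
    (h1 : d ∣ (1 + MvPowerSeries.X (1 : Fin 2)) ^ N - 1) : IsUnit d := by
  classical
  set φ : MvPowerSeries (Fin 2) ℤ_[p] →+* MvPowerSeries (Fin 2) (ZMod p) :=
    MvPowerSeries.map (PadicInt.toZMod (p := p)) with hφ
  haveI : CharP (MvPowerSeries (Fin 2) (ZMod p)) p := by
    apply charP_of_injective_ringHom (f := (MvPowerSeries.C (σ := Fin 2) (R := ZMod p))) ?_ p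
    intro x y hxy
    simpa using congrArg (MvPowerSeries.constantCoeff (σ := Fin 2) (R := ZMod p)) hxy
  set k := N.factorization p with hk
  set m := N / p ^ k with hm
  have hNkm : p ^ k * m = N := Nat.ordProj_mul_ordCompl_eq_self N p
  have hpm : ¬ p ∣ m := Nat.not_dvd_ordCompl (Fact.out : p.Prime) hN
  have hm0 : m ≠ 0 := by
    intro h; rw [h, mul_zero] at hNkm; exact hN hNkm.symm
  -- image of (1+X s)^N - 1 under φ factors as unit * X s ^ (p^k)
  have himg : ∀ s : Fin 2, φ ((1 + MvPowerSeries.X s) ^ N - 1) =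
      (∑ i ∈ range m, (1 + MvPowerSeries.X s ^ p ^ k) ^ i) * MvPowerSeries.X s ^ p ^ k := by
    intro s
    have : φ ((1 + MvPowerSeries.X s) ^ N - 1)
        = (1 + MvPowerSeries.X s : MvPowerSeries (Fin 2) (ZMod p)) ^ N - 1 := by
      rw [map_sub, map_pow, map_add, map_one, MvPowerSeries.map_X]
    rw [this, ← hNkm, pow_mul, add_pow_char_pow, one_pow]
    have := geom_sum_mul (1 + MvPowerSeries.X s ^ p ^ k : MvPowerSeries (Fin 2) (ZMod p)) m
    rw [add_sub_cancel_left] at this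
    rw [← this]
  have hunit : ∀ s : Fin 2,
      IsUnit (∑ i ∈ range m, (1 + MvPowerSeries.X s ^ p ^ k : MvPowerSeries (Fin 2) (ZMod p)) ^ i) := by
    intro s
    rw [MvPowerSeries.isUnit_iff_constantCoeff]
    have : (MvPowerSeries.constantCoeff (σ := Fin 2) (R := ZMod p))
        (∑ i ∈ range m, (1 + MvPowerSeries.X s ^ p ^ k) ^ i) = (m : ZMod p) := by
      rw [map_sum]
      have : ∀ i ∈ range m, (MvPowerSeries.constantCoeff (σ := Fin 2) (R := ZMod p))
          ((1 + MvPowerSeries.X s ^ p ^ k) ^ i) = 1 := by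
        intro i _
        rw [map_pow, map_add, map_one, map_pow, MvPowerSeries.constantCoeff_X,
          zero_pow (pow_ne_zero k (Fact.out : p.Prime).ne_zero), add_zero, one_pow]
      rw [Finset.sum_congr rfl this]
      simp
    rw [this]
    have : (m : ZMod p) ≠ 0 := by
      rw [Ne, ZMod.natCast_eq_zero_iff]
      exact hpm
    exact this.isUnit
  have hd0 : φ d ∣ MvPowerSeries.X (0 : Fin 2) ^ p ^ k := by
    have := (map_dvd φ h0)
    rw [himg 0] at this
    exact ((hunit 0).dvd_mul_left).mp this
  have hd1 : φ d ∣ MvPowerSeries.X (1 : Fin 2) ^ p ^ k := by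
    have := (map_dvd φ h1)
    rw [himg 1] at this
    exact ((hunit 1).dvd_mul_left).mp this
  have hu : IsUnit (φ d) := common_div_X_pow_unit hd0 hd1
  -- transfer back
  rw [MvPowerSeries.isUnit_iff_constantCoeff] at hu ⊢
  have hcc : (MvPowerSeries.constantCoeff (σ := Fin 2) (R := ZMod p)) (φ d)
      = PadicInt.toZMod ((MvPowerSeries.constantCoeff (σ := Fin 2) (R := ℤ_[p])) d) := by
    rw [hφ, MvPowerSeries.constantCoeff_map]
  rw [hcc] at hu
  by_contra hnu
  have hmem : (MvPowerSeries.constantCoeff (σ := Fin 2) (R := ℤ_[p])) d ∈ IsLocalRing.maximalIdeal ℤ_[p] :=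
    (IsLocalRing.mem_maximalIdeal _).mpr (mem_nonunits_iff.mpr hnu)
  rw [← PadicInt.ker_toZMod, RingHom.mem_ker] at hmem
  rw [hmem] at hu
  exact not_isUnit_zero hu

lemma dvd_pow_sub_one_of_dvd_sub {R : Type*} [CommRing R] {d x : R} (hx : IsUnit x)
    {c c' : ℕ} (hlt : c' < c) (h : d ∣ x ^ c - x ^ c') : d ∣ x ^ (c - c') - 1 := by
  have hfac : x ^ c - x ^ c' = (x ^ (c - c') - 1) * x ^ c' := by
    rw [sub_mul, ← pow_add, Nat.sub_add_cancel hlt.le, one_mul]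
  exact dvd_of_dvd_mul_unit (hx.pow c') (hfac ▸ h)

/-- Let `(a, b)` and `(a', b')` be pairs of natural numbers, each
pair not both zero, with `p ∤ a` or `p ∤ b`, and `p ∤ a'` or `p ∤ b'`, and suppose
`a·b' ≠ a'·b`.  Then `f_{a,b} = (1+X)^a·(1+Y)^b − 1` and
`f_{a',b'} = (1+X)^{a'}·(1+Y)^{b'} − 1` are coprime in `ℤ_p[[X, Y]]`: every common
divisor is a unit. -/
theorem stmt14 (p : ℕ) [Fact p.Prime] (a b a' b' : ℕ)
    (hab : ¬ (a = 0 ∧ b = 0)) (hab' : ¬ (a' = 0 ∧ b' = 0))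
    (hp : ¬ (p : ℕ) ∣ a ∨ ¬ (p : ℕ) ∣ b) (hp' : ¬ (p : ℕ) ∣ a' ∨ ¬ (p : ℕ) ∣ b')
    (hne : a * b' ≠ a' * b) :
    ∀ d : MvPowerSeries (Fin 2) ℤ_[p],
      d ∣ ((1 + MvPowerSeries.X (0 : Fin 2)) ^ a *
          (1 + MvPowerSeries.X (1 : Fin 2)) ^ b - 1) →
      d ∣ ((1 + MvPowerSeries.X (0 : Fin 2)) ^ a' *
          (1 + MvPowerSeries.X (1 : Fin 2)) ^ b' - 1) →
      IsUnit d := by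
  intro d h1 h2
  set x : MvPowerSeries (Fin 2) ℤ_[p] := 1 + MvPowerSeries.X (0 : Fin 2) with hxdef
  set y : MvPowerSeries (Fin 2) ℤ_[p] := 1 + MvPowerSeries.X (1 : Fin 2) with hydef
  have hx : IsUnit x := by
    rw [MvPowerSeries.isUnit_iff_constantCoeff]
    simp [hxdef]
  have hy : IsUnit y := by
    rw [MvPowerSeries.isUnit_iff_constantCoeff]
    simp [hydef]
  -- raise first relation to power n
  have pow1 : ∀ n : ℕ, d ∣ x ^ (a * n) * y ^ (b * n) - 1 := by
    intro n
    have h := dvd_trans h1 (sub_dvd_pow_sub_pow (x ^ a * y ^ b) 1 n)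
    rw [one_pow, mul_pow, ← pow_mul, ← pow_mul] at h
    exact h
  have pow2 : ∀ n : ℕ, d ∣ x ^ (a' * n) * y ^ (b' * n) - 1 := by
    intro n
    have h := dvd_trans h2 (sub_dvd_pow_sub_pow (x ^ a' * y ^ b') 1 n)
    rw [one_pow, mul_pow, ← pow_mul, ← pow_mul] at h
    exact h
  -- d ∣ x^(a b') - x^(a' b)
  have hX : d ∣ x ^ (a * b') - x ^ (a' * b) := by
    have hA := pow1 b'
    have hB := pow2 b
    have hC : d ∣ x ^ (a * b') * y ^ (b * b') - x ^ (a' * b) * y ^ (b' * b) := by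
      have := dvd_sub hA hB
      rwa [sub_sub_sub_cancel_right] at this
    have heq : x ^ (a * b') * y ^ (b * b') - x ^ (a' * b) * y ^ (b' * b)
        = (x ^ (a * b') - x ^ (a' * b)) * y ^ (b * b') := by
      rw [sub_mul, mul_comm b' b]
    rw [heq] at hC
    exact dvd_of_dvd_mul_unit (hy.pow (b * b')) hC
  -- d ∣ y^(a' b) - y^(a b')
  have hY : d ∣ y ^ (a' * b) - y ^ (a * b') := by
    have hA := pow1 a'
    have hB := pow2 a
    have hC : d ∣ x ^ (a * a') * y ^ (b * a') - x ^ (a' * a) * y ^ (b' * a) := by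
      have := dvd_sub hA hB
      rwa [sub_sub_sub_cancel_right] at this
    have heq : x ^ (a * a') * y ^ (b * a') - x ^ (a' * a) * y ^ (b' * a)
        = (y ^ (a' * b) - y ^ (a * b')) * x ^ (a * a') := by
      rw [sub_mul, mul_comm a' a, mul_comm b a', mul_comm b' a]
      ring
    rw [heq] at hC
    exact dvd_of_dvd_mul_unit (hx.pow (a * a')) hC
  rcases Nat.lt_or_ge (a' * b) (a * b') with hlt | hge
  · -- N = a*b' - a'*b
    have hxN : d ∣ x ^ (a * b' - a' * b) - 1 := dvd_pow_sub_one_of_dvd_sub hx hlt hX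
    have hY' : d ∣ y ^ (a * b') - y ^ (a' * b) := by
      have := dvd_neg.mpr hY
      rw [neg_sub] at this
      exact this
    have hyN : d ∣ y ^ (a * b' - a' * b) - 1 := dvd_pow_sub_one_of_dvd_sub hy hlt hY'
    exact key_lemma (a * b' - a' * b) (by omega) d hxN hyN
  · have hlt' : a * b' < a' * b := by
      rcases Nat.lt_or_ge (a * b') (a' * b) with h | h
      · exact h
      · omega
    have hX' : d ∣ x ^ (a' * b) - x ^ (a * b') := by
      have := dvd_neg.mpr hX
      rw [neg_sub] at this
      exact this
    have hxN : d ∣ x ^ (a' * b - a * b') - 1 := dvd_pow_sub_one_of_dvd_sub hx hlt' hX'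
    have hyN : d ∣ y ^ (a' * b - a * b') - 1 := dvd_pow_sub_one_of_dvd_sub hy hlt' hY
    exact key_lemma (a' * b - a * b') (by omega) d hxN hyN

end Main
end
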